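/- arXiv:2503.17232 — 6 statements merged into one kernel-verified Lean document; each statement's English description precedes it below -/
import Mathlib

section
/- For all p ∈ ℕ, all β ≥ 0, all integers 1 ≤ s ≤ t, and every starting configuration X = (x^1,…,x^p) ∈ (ℤ²)^p, one has E^{⊗p}_X[ exp( Σ_{n=s}^t Σ_{x∈ℤ²} Λ_{N_n^p(x)}(β) ) ] ≤ E^{⊗p}_{(0,…,0)}[ exp( Σ_{n=s}^t Σ_{x∈ℤ²} Λ_{N_n^p(x)}(β) ) ]; in particular, for Gaussian weights, E^{⊗p}_X[ exp( β² Σ_{n=s}^t Σ_{1≤i<j≤p} 1{S_n^i = S_n^j} ) ] ≤ E^{⊗p}_{(0,…,0)}[ exp( β² Σ_{n=s}^t Σ_{1≤i<j≤p} 1{S_n^i = S_n^j} ) ]. -/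
set_option autoImplicit false
set_option maxHeartbeats 1000000


open MeasureTheory ProbabilityTheory Filter Finset

noncomputable section

namespace DP

/-- The four nearest-neighbour steps of the simple random walk on `ℤ²`. -/
def steps : Finset (ℤ × ℤ) := {(1, 0), (-1, 0), (0, 1), (0, -1)}

/-- Position at time `n` of the nearest-neighbour path started at `x` whose first `t`
increments are given by `δ`. -/
def walkPath {t : ℕ} (x : ℤ × ℤ) (δ : Fin t → ℤ × ℤ) (n : ℕ) : ℤ × ℤ :=
  x + ∑ k ∈ Finset.univ.filter (fun k : Fin t => (k : ℕ) < n), δ k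

/-- Expectation, with respect to `q` independent simple random walks on `ℤ²` run for `t`
steps and started at `X`, of a functional `f` of the paths. -/
def Ewalk (q t : ℕ) (X : Fin q → ℤ × ℤ) (f : (Fin q → ℕ → ℤ × ℤ) → ℝ) : ℝ :=
  (∑ δ : Fin q → Fin t → steps,
      f fun i => walkPath (X i) fun k => ((δ i k : ℤ × ℤ))) / 4 ^ (q * t)

open Classical in
/-- Probability of an event for `q` independent simple random walks started at `X`. -/
def Pwalk (q t : ℕ) (X : Fin q → ℤ × ℤ) (A : (Fin q → ℕ → ℤ × ℤ) → Prop) : ℝ :=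
  Ewalk q t X fun S => if A S then 1 else 0

/-- `p_n(x) = P_0(S_n = x)` for the simple random walk on `ℤ²`. -/
def pSRW (n : ℕ) (x : ℤ × ℤ) : ℝ :=
  Pwalk 1 n (fun _ => 0) fun S => S 0 n = x

/-- `p_n^⋆ = sup_{x ∈ ℤ²} p_n(x)`. -/
def pstar (n : ℕ) : ℝ := ⨆ x : ℤ × ℤ, pSRW n x

/-- `R_N = Σ_{n=1}^N p_{2n}(0)`, the expected number of collisions of two walks. -/
def RN (N : ℕ) : ℝ := ∑ n ∈ Finset.Icc 1 N, pSRW (2 * n) 0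

/-- `Λ(β) = log E_μ[exp(β ω)]`. -/
def cgf (μ : Measure ℝ) (β : ℝ) : ℝ := Real.log (∫ x, Real.exp (β * x) ∂μ)

/-- `Λ_p(β) = Λ(pβ) - pΛ(β)` for `p ≥ 2`, and `Λ_0 = Λ_1 = 0`. -/
def cgfp (μ : Measure ℝ) (p : ℕ) (β : ℝ) : ℝ :=
  if 2 ≤ p then cgf μ ((p : ℝ) * β) - (p : ℝ) * cgf μ β else 0

/-- `σ² = exp(Λ₂(β)) - 1`. -/
def sigma2 (μ : Measure ℝ) (β : ℝ) : ℝ := Real.exp (cgfp μ 2 β) - 1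

/-- `σ̄² = σ²/π`. -/
def sigmabar2 (μ : Measure ℝ) (β : ℝ) : ℝ := sigma2 μ β / Real.pi

/-- Environment law: probability measure with mean `0`, variance `1` and finite
exponential moments. -/
structure EnvLaw (μ : Measure ℝ) : Prop where
  prob : IsProbabilityMeasure μ
  mean_zero : ∫ x, x ∂μ = 0
  variance_one : ∫ x, x ^ 2 ∂μ = 1
  exp_moments : ∀ β : ℝ, Integrable (fun x => Real.exp (β * x)) μ

/-- The field `ω(n,x)` is i.i.d. with common law `μ` under `P`. -/
structure IsIIDEnv {Ω : Type*} [MeasurableSpace Ω] (P : Measure Ω) (μ : Measure ℝ)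
    (ω : ℕ → ℤ × ℤ → Ω → ℝ) : Prop where
  meas : ∀ n x, Measurable (ω n x)
  indep : iIndepFun (fun p : ℕ × (ℤ × ℤ) => ω p.1 p.2) P
  law : ∀ n x, P.map (ω n x) = μ

/-- The partition function `W_{s,t}(x,β)`, as a function of the environment. -/
def W {Ω : Type*} (μ : Measure ℝ) (ω : ℕ → ℤ × ℤ → Ω → ℝ) (s t : ℕ) (x : ℤ × ℤ)
    (β : ℝ) (ωe : Ω) : ℝ :=
  Ewalk 1 t (fun _ => x) fun S =>
    Real.exp (∑ n ∈ Finset.Icc s t, (β * ω n (S 0 n) ωe - cgf μ β))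

/-- Sub-critical regime: `β_N = β̂/√R_N` with `β̂ ∈ (0,1)` fixed. -/
def SC (βN : ℕ → ℝ) (bhat : ℝ) : Prop :=
  0 < bhat ∧ bhat < 1 ∧ ∀ N, βN N = bhat / Real.sqrt (RN N)

/-- Quasi-critical regime: `σ_N² = (1/R_N)(1 - ϑ_N/log N)` with `1 ≪ ϑ_N ≪ log N`. -/
structure QC (μ : Measure ℝ) (βN : ℕ → ℝ) (ϑ : ℕ → ℝ) : Prop where
  sigma_eq : ∀ N, 2 ≤ N → sigma2 μ (βN N) = (1 / RN N) * (1 - ϑ N / Real.log N)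
  theta_top : Tendsto ϑ atTop atTop
  theta_small : Tendsto (fun N => ϑ N / Real.log N) atTop (nhds 0)

/-- `U_N(n)`. -/
def UN (μ : Measure ℝ) (β : ℝ) (n : ℕ) : ℝ :=
  if n = 0 then 1
  else
    sigma2 μ β * Ewalk 2 n (fun _ => 0) fun S =>
      Real.exp (cgfp μ 2 β *
          ∑ l ∈ Finset.Icc 1 (n - 1), (if S 0 l = S 1 l then (1 : ℝ) else 0)) *
        (if S 0 n = S 1 n then (1 : ℝ) else 0)

/-- `F(u) = 1/(u(1 - σ̄² log u))`. -/
def Ffun (σb2 : ℝ) (u : ℝ) : ℝ := 1 / (u * (1 - σb2 * Real.log u))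

/-- `f(v) = σ̄⁻² log((1 - σ̄² log v)/(1 - σ̄² log t))`. -/
def ffun (σb2 t : ℝ) (v : ℝ) : ℝ :=
  σb2⁻¹ * Real.log ((1 - σb2 * Real.log v) / (1 - σb2 * Real.log t))

/-- `b_t = (1 - σ̄² log t)⁻¹`. -/
def bfun (σb2 t : ℝ) : ℝ := (1 - σb2 * Real.log t)⁻¹

/-- The set of (ordered) pairs `C_q = {(i,j) : 1 ≤ i < j ≤ q}`. -/
def Cq (q : ℕ) : Finset (Fin q × Fin q) := Finset.univ.filter fun p => p.1 < p.2

/-- `ψ*_{s,t,q} = Σ_{n=s}^t Σ_{i<j} 1{S_n^i = S_n^j}`, the pairwise collision count. -/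
def pairSum (q : ℕ) (s t : ℕ) (S : Fin q → ℕ → ℤ × ℤ) : ℝ :=
  ∑ n ∈ Finset.Icc s t, ∑ i : Fin q, ∑ j : Fin q,
    if i < j ∧ S i n = S j n then (1 : ℝ) else 0

end DP

namespace DP


section PiIntegral

variable {μ : Measure ℝ} [IsProbabilityMeasure μ]

theorem my_integrable_fin_prod : ∀ {n : ℕ} (f : Fin n → ℝ → ℝ),
    (∀ i, Integrable (f i) μ) →
    Integrable (fun x : Fin n → ℝ => ∏ i, f i (x i)) (Measure.pi fun _ => μ) := by
  intro n
  induction n with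
  | zero =>
      intro f hf
      simp only [Finset.univ_eq_empty, Finset.prod_empty]
      exact integrable_const _
  | succ n n_ih =>
      intro f hf
      have h := ((measurePreserving_piFinSuccAbove (fun _ : Fin (n+1) => μ) 0).symm)
      rw [← h.integrable_comp_emb (MeasurableEquiv.measurableEmbedding _)]
      simp_rw [MeasurableEquiv.piFinSuccAbove_symm_apply, Fin.insertNthEquiv,
        Fin.prod_univ_succ, Fin.insertNth_zero]
      simp only [Fin.zero_succAbove, Nat.cast_id, Function.comp_def, Fin.cons_zero, Fin.cons_succ,
        Equiv.coe_fn_mk, cast_eq]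
      exact Integrable.mul_prod (hf 0) (n_ih (fun i => f i.succ) (fun i => hf _))

theorem my_integral_fin_prod : ∀ {n : ℕ} (f : Fin n → ℝ → ℝ),
    ∫ x : Fin n → ℝ, ∏ i, f i (x i) ∂(Measure.pi fun _ => μ) = ∏ i, ∫ y, f i y ∂μ := by
  intro n
  induction n with
  | zero => intro f; simp
  | succ n n_ih =>
      intro f
      calc ∫ x : Fin (n+1) → ℝ, ∏ i, f i (x i) ∂(Measure.pi fun _ => μ)
          = ∫ z : ℝ × (Fin n → ℝ), f 0 z.1 * ∏ i : Fin n, f i.succ (z.2 i)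
              ∂(μ.prod (Measure.pi fun _ => μ)) := by
            rw [← ((measurePreserving_piFinSuccAbove (fun _ : Fin (n+1) => μ) 0).symm).integral_comp']
            simp_rw [MeasurableEquiv.piFinSuccAbove_symm_apply, Fin.insertNthEquiv,
              Fin.prod_univ_succ, Fin.insertNth_zero]
            simp only [Fin.zero_succAbove, Nat.cast_id, Equiv.coe_fn_mk, Fin.cons_succ,
              Fin.cons_zero, cast_eq]
        _ = (∫ y, f 0 y ∂μ) * ∏ i : Fin n, ∫ y, f i.succ y ∂μ := by
            rw [← n_ih (fun i => f i.succ), ← integral_prod_mul]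
        _ = ∏ i, ∫ y, f i y ∂μ := by rw [Fin.prod_univ_succ]

theorem my_integrable_prod {ι : Type} [Fintype ι] (f : ι → ℝ → ℝ)
    (hf : ∀ c, Integrable (f c) μ) :
    Integrable (fun x : ι → ℝ => ∏ c, f c (x c)) (Measure.pi fun _ => μ) := by
  let e := (Fintype.equivFin ι).symm
  rw [← (measurePreserving_piCongrLeft (fun _ : ι => μ) e).integrable_comp_emb
    (MeasurableEquiv.measurableEmbedding _)]
  simp_rw [Function.comp_def, MeasurableEquiv.coe_piCongrLeft, ← e.prod_comp,
    Equiv.piCongrLeft_apply_apply]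
  exact my_integrable_fin_prod _ (fun i => hf _)

theorem my_integral_prod {ι : Type} [Fintype ι] (f : ι → ℝ → ℝ) :
    ∫ x : ι → ℝ, ∏ c, f c (x c) ∂(Measure.pi fun _ => μ) = ∏ c, ∫ y, f c y ∂μ := by
  let e := (Fintype.equivFin ι).symm
  rw [← (measurePreserving_piCongrLeft (fun _ : ι => μ) e).integral_comp']
  simp_rw [MeasurableEquiv.coe_piCongrLeft, ← e.prod_comp, Equiv.piCongrLeft_apply_apply]
  exact my_integral_fin_prod (fun k => f (e k))

end PiIntegral

theorem my_amgm {p : ℕ} (hp : 0 < p) (a : Fin p → ℝ) (ha : ∀ i, 0 ≤ a i) :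
    ∏ i, a i ≤ (p : ℝ)⁻¹ * ∑ i, a i ^ p := by
  have hp' : (p : ℝ) ≠ 0 := Nat.cast_ne_zero.mpr hp.ne'
  have h := Real.geom_mean_le_arith_mean_weighted Finset.univ (fun _ => (p : ℝ)⁻¹)
      (fun i => a i ^ p) (fun i _ => by positivity)
      (by rw [Finset.sum_const, Finset.card_univ, Fintype.card_fin, nsmul_eq_mul,
        mul_inv_cancel₀ hp']) (fun i _ => pow_nonneg (ha i) p)
  calc ∏ i, a i = ∏ i, (a i ^ p) ^ ((p : ℝ)⁻¹) := by
        refine Finset.prod_congr rfl fun i _ => ?_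
        rw [← Real.rpow_natCast (a i) p, ← Real.rpow_mul (ha i),
          mul_inv_cancel₀ hp', Real.rpow_one]
    _ ≤ ∑ i, (p : ℝ)⁻¹ * a i ^ p := h
    _ = (p : ℝ)⁻¹ * ∑ i, a i ^ p := by rw [Finset.mul_sum]

section Core

variable {μ : Measure ℝ}

def MM (μ : Measure ℝ) (b : ℝ) : ℝ := ∫ y, Real.exp (b * y) ∂μ

lemma MM_pos [IsProbabilityMeasure μ]
    (hint : ∀ b : ℝ, Integrable (fun x => Real.exp (b * x)) μ) (b : ℝ) : 0 < MM μ b := by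
  rw [MM, integral_pos_iff_support_of_nonneg (fun x => (Real.exp_pos _).le) (hint b)]
  have hs : Function.support (fun y : ℝ => Real.exp (b * y)) = Set.univ := by
    ext y; simp [Function.mem_support, (Real.exp_pos _).ne']
  rw [hs]
  simp

lemma MM_zero [IsProbabilityMeasure μ] : MM μ 0 = 1 := by simp [MM]

lemma cgf_eq_log_MM (b : ℝ) : cgf μ b = Real.log (MM μ b) := rfl

lemma exp_cgfp [IsProbabilityMeasure μ]
    (hint : ∀ b : ℝ, Integrable (fun x => Real.exp (b * x)) μ) (β : ℝ) (k : ℕ) :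
    Real.exp (cgfp μ k β) = MM μ ((k : ℝ) * β) / (MM μ β) ^ k := by
  rcases lt_or_ge k 2 with hk | hk
  · interval_cases k
    · simp [cgfp, MM_zero]
    · simp [cgfp, div_self (MM_pos hint β).ne']
  · have hMβ := MM_pos hint β
    have hMk := MM_pos hint ((k : ℝ) * β)
    rw [cgfp, if_pos hk, Real.exp_sub, Real.exp_nat_mul, cgf_eq_log_MM, cgf_eq_log_MM,
      Real.exp_log hMk, Real.exp_log hMβ]

def cnt {p : ℕ} (P : Fin p → ℤ × ℤ) (x : ℤ × ℤ) : ℕ := ∑ i, if P i = x then 1 else 0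

def occ {p : ℕ} (P : Fin p → ℤ × ℤ) : Finset (ℤ × ℤ) := Finset.image P Finset.univ

lemma cnt_eq_zero {p : ℕ} {P : Fin p → ℤ × ℤ} {x : ℤ × ℤ} (hx : x ∉ occ P) : cnt P x = 0 := by
  apply Finset.sum_eq_zero; intro i _
  rw [if_neg]; intro h; exact hx (Finset.mem_image.mpr ⟨i, Finset.mem_univ i, h⟩)

lemma sum_cnt {p : ℕ} (P : Fin p → ℤ × ℤ) : ∑ x ∈ occ P, cnt P x = p := by
  unfold cnt
  rw [Finset.sum_comm]
  have : ∀ i : Fin p, ∑ x ∈ occ P, (if P i = x then 1 else 0) = 1 := by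
    intro i
    have hmem : P i ∈ occ P := Finset.mem_image.mpr ⟨i, Finset.mem_univ i, rfl⟩
    rw [Finset.sum_ite_eq (occ P) (P i) (fun _ => 1), if_pos hmem]
  rw [Finset.sum_congr rfl (fun i _ => this i)]
  simp

lemma cgfp_zero_left (β : ℝ) : cgfp μ 0 β = 0 := by simp [cgfp]

lemma tsum_cgfp_eq (μ : Measure ℝ) (β : ℝ) {p : ℕ} (P : Fin p → ℤ × ℤ) :
    ∑' x : ℤ × ℤ, cgfp μ (cnt P x) β = ∑ x ∈ occ P, cgfp μ (cnt P x) β :=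
  tsum_eq_sum (fun x hx => by rw [cnt_eq_zero hx, cgfp_zero_left])

lemma exp_tsum_cgfp [IsProbabilityMeasure μ]
    (hint : ∀ b : ℝ, Integrable (fun x => Real.exp (b * x)) μ) (β : ℝ) {p : ℕ}
    (P : Fin p → ℤ × ℤ) :
    Real.exp (∑' x : ℤ × ℤ, cgfp μ (cnt P x) β)
      = (∏ x ∈ occ P, MM μ ((cnt P x : ℝ) * β)) / (MM μ β) ^ p := by
  rw [tsum_cgfp_eq, Real.exp_sum,
    Finset.prod_congr rfl (fun x _ => exp_cgfp hint β (cnt P x)),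
    Finset.prod_div_distrib, Finset.prod_pow_eq_pow_sum, sum_cnt]

lemma exp_total [IsProbabilityMeasure μ]
    (hint : ∀ b : ℝ, Integrable (fun x => Real.exp (b * x)) μ) (β : ℝ) (s t : ℕ) {p : ℕ}
    (S : Fin p → ℕ → ℤ × ℤ) :
    Real.exp (∑ n ∈ Finset.Icc s t, ∑' x : ℤ × ℤ, cgfp μ (cnt (fun i => S i n) x) β)
      = (∏ n ∈ Finset.Icc s t, ∏ x ∈ occ (fun i => S i n),
            MM μ ((cnt (fun i => S i n) x : ℝ) * β))
        / ((MM μ β) ^ p) ^ (Finset.Icc s t).card := by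
  rw [Real.exp_sum,
    Finset.prod_congr rfl (fun n _ => exp_tsum_cgfp hint β (fun i => S i n)),
    Finset.prod_div_distrib, Finset.prod_const]

end Core

section Env

variable {μ : Measure ℝ}

abbrev Idx (s t : ℕ) (B : Finset (ℤ × ℤ)) : Type :=
  {c : ℕ × (ℤ × ℤ) // c ∈ Finset.Icc s t ×ˢ B}

def Pm (μ : Measure ℝ) (s t : ℕ) (B : Finset (ℤ × ℤ)) : Measure (Idx s t B → ℝ) :=
  Measure.pi fun _ => μ

def wx (s t : ℕ) (B : Finset (ℤ × ℤ)) (ω : Idx s t B → ℝ) (a : ℕ × (ℤ × ℤ)) : ℝ :=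
  if h : a ∈ Finset.Icc s t ×ˢ B then ω ⟨a, h⟩ else 0

def Kc (s t : ℕ) {p : ℕ} (P : Fin p → ℕ → ℤ × ℤ) (a : ℕ × (ℤ × ℤ)) : ℕ :=
  ∑ n ∈ Finset.Icc s t, ∑ i, if (n, P i n) = a then 1 else 0

lemma wx_eq_sum {s t : ℕ} {B : Finset (ℤ × ℤ)} (ω : Idx s t B → ℝ) (a : ℕ × (ℤ × ℤ))
    (ha : a ∈ Finset.Icc s t ×ˢ B) :
    wx s t B ω a = ∑ c : Idx s t B, if a = (c : ℕ × (ℤ × ℤ)) then ω c else 0 := by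
  rw [wx, dif_pos ha, Finset.sum_eq_single (⟨a, ha⟩ : Idx s t B)]
  · rw [if_pos rfl]
  · intro c _ hc
    rw [if_neg]
    intro h; exact hc (Subtype.ext h.symm)
  · intro h; exact absurd (Finset.mem_univ _) h

lemma sum_wx {s t : ℕ} {B : Finset (ℤ × ℤ)} {p : ℕ} (P : Fin p → ℕ → ℤ × ℤ)
    (hP : ∀ i, ∀ n ∈ Finset.Icc s t, P i n ∈ B) (ω : Idx s t B → ℝ) :
    ∑ n ∈ Finset.Icc s t, ∑ i : Fin p, wx s t B ω (n, P i n)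
      = ∑ c : Idx s t B, (Kc s t P c : ℝ) * ω c := by
  calc ∑ n ∈ Finset.Icc s t, ∑ i : Fin p, wx s t B ω (n, P i n)
      = ∑ n ∈ Finset.Icc s t, ∑ i : Fin p, ∑ c : Idx s t B,
          if (n, P i n) = (c : ℕ × (ℤ × ℤ)) then ω c else 0 :=
        Finset.sum_congr rfl fun n hn => Finset.sum_congr rfl fun i _ =>
          wx_eq_sum ω _ (Finset.mem_product.mpr ⟨hn, hP i n hn⟩)
    _ = ∑ n ∈ Finset.Icc s t, ∑ c : Idx s t B, ∑ i : Fin p,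
          if (n, P i n) = (c : ℕ × (ℤ × ℤ)) then ω c else 0 :=
        Finset.sum_congr rfl fun n _ => Finset.sum_comm
    _ = ∑ c : Idx s t B, ∑ n ∈ Finset.Icc s t, ∑ i : Fin p,
          if (n, P i n) = (c : ℕ × (ℤ × ℤ)) then ω c else 0 := Finset.sum_comm
    _ = ∑ c : Idx s t B, (∑ n ∈ Finset.Icc s t, ∑ i : Fin p,
          if (n, P i n) = (c : ℕ × (ℤ × ℤ)) then (1 : ℝ) else 0) * ω c := by
        refine Finset.sum_congr rfl fun c _ => ?_
        rw [Finset.sum_mul]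
        refine Finset.sum_congr rfl fun n _ => ?_
        rw [Finset.sum_mul]
        refine Finset.sum_congr rfl fun i _ => ?_
        split <;> simp
    _ = ∑ c : Idx s t B, (Kc s t P c : ℝ) * ω c := by
        refine Finset.sum_congr rfl fun c _ => ?_
        congr 1
        rw [Kc]
        push_cast
        rfl

lemma term_eq {s t : ℕ} {B : Finset (ℤ × ℤ)} {p : ℕ} (β : ℝ) (P : Fin p → ℕ → ℤ × ℤ)
    (hP : ∀ i, ∀ n ∈ Finset.Icc s t, P i n ∈ B) (ω : Idx s t B → ℝ) :
    ∏ n ∈ Finset.Icc s t, ∏ i : Fin p, Real.exp (β * wx s t B ω (n, P i n))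
      = ∏ c : Idx s t B, Real.exp ((Kc s t P c : ℝ) * β * ω c) := by
  have h : ∑ n ∈ Finset.Icc s t, ∑ i : Fin p, β * wx s t B ω (n, P i n)
      = ∑ c : Idx s t B, (Kc s t P c : ℝ) * β * ω c := by
    simp_rw [← Finset.mul_sum]
    rw [sum_wx P hP ω, Finset.mul_sum]
    exact Finset.sum_congr rfl fun c _ => by ring
  simp_rw [← Real.exp_sum]
  exact congrArg Real.exp h

lemma Kc_eq {s t : ℕ} {p : ℕ} (P : Fin p → ℕ → ℤ × ℤ) {n : ℕ}
    (hn : n ∈ Finset.Icc s t) (x : ℤ × ℤ) :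
    Kc s t P (n, x) = cnt (fun i => P i n) x := by
  rw [Kc, Finset.sum_eq_single_of_mem n hn]
  · unfold cnt
    refine Finset.sum_congr rfl fun i _ => ?_
    simp [Prod.ext_iff]
  · intro n' _ hn'
    exact Finset.sum_eq_zero fun i _ =>
      if_neg (fun hcontr => hn' (congrArg Prod.fst hcontr))

lemma term_integrable [IsProbabilityMeasure μ]
    (hint : ∀ b : ℝ, Integrable (fun x => Real.exp (b * x)) μ)
    {s t : ℕ} {B : Finset (ℤ × ℤ)} {p : ℕ} (β : ℝ) (P : Fin p → ℕ → ℤ × ℤ)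
    (hP : ∀ i, ∀ n ∈ Finset.Icc s t, P i n ∈ B) :
    Integrable (fun ω => ∏ n ∈ Finset.Icc s t, ∏ i : Fin p,
      Real.exp (β * wx s t B ω (n, P i n))) (Pm μ s t B) := by
  refine (my_integrable_prod (ι := Idx s t B) (fun c y => Real.exp ((Kc s t P c : ℝ) * β * y))
    (fun c => hint _)).congr (ae_of_all _ fun ω => ?_)
  exact (term_eq β P hP ω).symm

lemma term_integral [IsProbabilityMeasure μ]
    (hint : ∀ b : ℝ, Integrable (fun x => Real.exp (b * x)) μ)
    {s t : ℕ} {B : Finset (ℤ × ℤ)} {p : ℕ} (β : ℝ) (P : Fin p → ℕ → ℤ × ℤ)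
    (hP : ∀ i, ∀ n ∈ Finset.Icc s t, P i n ∈ B) :
    ∫ ω, ∏ n ∈ Finset.Icc s t, ∏ i : Fin p,
        Real.exp (β * wx s t B ω (n, P i n)) ∂(Pm μ s t B)
      = ∏ n ∈ Finset.Icc s t, ∏ x ∈ occ (fun i => P i n),
          MM μ ((cnt (fun i => P i n) x : ℝ) * β) := by
  calc ∫ ω, ∏ n ∈ Finset.Icc s t, ∏ i : Fin p,
          Real.exp (β * wx s t B ω (n, P i n)) ∂(Pm μ s t B)
      = ∫ ω, ∏ c : Idx s t B, Real.exp ((Kc s t P c : ℝ) * β * (ω c)) ∂(Pm μ s t B) :=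
        integral_congr_ae (ae_of_all _ fun ω => term_eq β P hP ω)
    _ = ∏ c : Idx s t B, ∫ y, Real.exp ((Kc s t P c : ℝ) * β * y) ∂μ :=
        my_integral_prod (ι := Idx s t B) (fun c y => Real.exp ((Kc s t P c : ℝ) * β * y))
    _ = ∏ c : Idx s t B, MM μ ((Kc s t P (c : ℕ × (ℤ × ℤ)) : ℝ) * β) := rfl
    _ = ∏ a ∈ Finset.Icc s t ×ˢ B, MM μ ((Kc s t P a : ℝ) * β) :=
        Finset.prod_coe_sort (Finset.Icc s t ×ˢ B) (fun a => MM μ ((Kc s t P a : ℝ) * β))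
    _ = ∏ n ∈ Finset.Icc s t, ∏ x ∈ B, MM μ ((Kc s t P (n, x) : ℝ) * β) :=
        Finset.prod_product _ _ _
    _ = ∏ n ∈ Finset.Icc s t, ∏ x ∈ B, MM μ ((cnt (fun i => P i n) x : ℝ) * β) :=
        Finset.prod_congr rfl fun n hn => Finset.prod_congr rfl fun x _ => by
          rw [Kc_eq P hn x]
    _ = ∏ n ∈ Finset.Icc s t, ∏ x ∈ occ (fun i => P i n),
          MM μ ((cnt (fun i => P i n) x : ℝ) * β) := by
        refine Finset.prod_congr rfl fun n hn => ?_
        refine (Finset.prod_subset ?_ ?_).symm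
        · intro x hx
          obtain ⟨i, _, rfl⟩ := Finset.mem_image.mp hx
          exact hP i n hn
        · intro x _ hx
          rw [cnt_eq_zero hx]
          simp [MM_zero]

def W1 (β : ℝ) (s t : ℕ) (B : Finset (ℤ × ℤ)) (ω : Idx s t B → ℝ) (y : ℤ × ℤ) : ℝ :=
  ∑ ε : Fin t → steps, ∏ n ∈ Finset.Icc s t,
    Real.exp (β * wx s t B ω (n, walkPath y (fun k => ((ε k : ℤ × ℤ))) n))

lemma W1_nonneg (β : ℝ) (s t : ℕ) (B : Finset (ℤ × ℤ)) (ω : Idx s t B → ℝ) (y : ℤ × ℤ) :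
    0 ≤ W1 β s t B ω y :=
  Finset.sum_nonneg fun ε _ => Finset.prod_nonneg fun n _ => (Real.exp_pos _).le

lemma prod_W1 {p : ℕ} (β : ℝ) (s t : ℕ) (B : Finset (ℤ × ℤ)) (Y : Fin p → ℤ × ℤ)
    (ω : Idx s t B → ℝ) :
    ∏ i, W1 β s t B ω (Y i)
      = ∑ δ : Fin p → Fin t → steps, ∏ n ∈ Finset.Icc s t, ∏ i : Fin p,
          Real.exp (β * wx s t B ω (n, walkPath (Y i) (fun k => ((δ i k : ℤ × ℤ))) n)) := by
  unfold W1
  rw [Finset.prod_univ_sum]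
  rw [Fintype.piFinset_univ]
  exact Finset.sum_congr rfl fun δ _ => Finset.prod_comm

def BN (μ : Measure ℝ) (β : ℝ) (s t : ℕ) (p : ℕ) (Y : Fin p → ℤ × ℤ) : ℝ :=
  ∑ δ : Fin p → Fin t → steps, ∏ n ∈ Finset.Icc s t,
    ∏ x ∈ occ (fun i => walkPath (Y i) (fun k => ((δ i k : ℤ × ℤ))) n),
      MM μ ((cnt (fun i => walkPath (Y i) (fun k => ((δ i k : ℤ × ℤ))) n) x : ℝ) * β)

lemma master [IsProbabilityMeasure μ]
    (hint : ∀ b : ℝ, Integrable (fun x => Real.exp (b * x)) μ)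
    (β : ℝ) (s t : ℕ) (B : Finset (ℤ × ℤ)) {p : ℕ} (Y : Fin p → ℤ × ℤ)
    (hY : ∀ i (ε : Fin t → steps) (n : ℕ), n ∈ Finset.Icc s t →
      walkPath (Y i) (fun k => ((ε k : ℤ × ℤ))) n ∈ B) :
    Integrable (fun ω => ∏ i, W1 β s t B ω (Y i)) (Pm μ s t B) ∧
    ∫ ω, ∏ i, W1 β s t B ω (Y i) ∂(Pm μ s t B) = BN μ β s t p Y := by
  have hP : ∀ δ : Fin p → Fin t → steps, ∀ i, ∀ n ∈ Finset.Icc s t,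
      (fun i n => walkPath (Y i) (fun k => ((δ i k : ℤ × ℤ))) n) i n ∈ B :=
    fun δ i n hn => hY i (δ i) n hn
  have hfun : (fun ω => ∏ i, W1 β s t B ω (Y i))
      = fun ω => ∑ δ : Fin p → Fin t → steps, ∏ n ∈ Finset.Icc s t, ∏ i : Fin p,
          Real.exp (β * wx s t B ω (n, walkPath (Y i) (fun k => ((δ i k : ℤ × ℤ))) n)) :=
    funext fun ω => prod_W1 β s t B Y ω
  constructor
  · rw [hfun]
    exact integrable_finset_sum _ fun δ _ => term_integrable hint β _ (hP δ)
  · rw [hfun, integral_finset_sum _ (fun δ _ => term_integrable hint β _ (hP δ))]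
    exact Finset.sum_congr rfl fun δ _ => term_integral hint β _ (hP δ)

end Env

section Main

variable {μ : Measure ℝ}

lemma BN_le [IsProbabilityMeasure μ]
    (hint : ∀ b : ℝ, Integrable (fun x => Real.exp (b * x)) μ)
    (β : ℝ) (s t : ℕ) (B : Finset (ℤ × ℤ)) {p : ℕ} (hp : 0 < p) (X : Fin p → ℤ × ℤ)
    (hX : ∀ i (ε : Fin t → steps) (n : ℕ), n ∈ Finset.Icc s t →
      walkPath (X i) (fun k => ((ε k : ℤ × ℤ))) n ∈ B) :
    BN μ β s t p X ≤ (p : ℝ)⁻¹ * ∑ j, BN μ β s t p (fun _ => X j) := by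
  have hm := master (μ := μ) hint β s t B X hX
  have hmd : ∀ j : Fin p,
      Integrable (fun ω => ∏ i : Fin p, W1 β s t B ω (X j)) (Pm μ s t B) ∧
      ∫ ω, ∏ i : Fin p, W1 β s t B ω (X j) ∂(Pm μ s t B) = BN μ β s t p (fun _ => X j) :=
    fun j => master hint β s t B (fun _ => X j) (fun _ ε n hn => hX j ε n hn)
  have hpow : ∀ (ω : Idx s t B → ℝ) (j : Fin p),
      (W1 β s t B ω (X j)) ^ p = ∏ _i : Fin p, W1 β s t B ω (X j) := fun ω j => by
    rw [Finset.prod_const, Finset.card_univ, Fintype.card_fin]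
  have hpt : ∀ ω : Idx s t B → ℝ, ∏ i, W1 β s t B ω (X i)
      ≤ (p : ℝ)⁻¹ * ∑ j : Fin p, ∏ _i : Fin p, W1 β s t B ω (X j) := by
    intro ω
    have h := my_amgm hp (fun i => W1 β s t B ω (X i)) (fun i => W1_nonneg β s t B ω (X i))
    refine h.trans (le_of_eq ?_)
    congr 1
    exact Finset.sum_congr rfl fun j _ => hpow ω j
  have key : ∫ ω, ∏ i, W1 β s t B ω (X i) ∂(Pm μ s t B)
      ≤ ∫ ω, (p : ℝ)⁻¹ * ∑ j : Fin p, ∏ _i : Fin p, W1 β s t B ω (X j) ∂(Pm μ s t B) :=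
    integral_mono hm.1
      (((integrable_finset_sum _ fun j _ => (hmd j).1).const_mul _)) hpt
  rw [← hm.2]
  refine key.trans (le_of_eq ?_)
  rw [integral_const_mul]
  congr 1
  rw [integral_finset_sum _ (fun j _ => (hmd j).1)]
  exact Finset.sum_congr rfl fun j _ => (hmd j).2

def AN (μ : Measure ℝ) (β : ℝ) (s t : ℕ) (p : ℕ) (Y : Fin p → ℤ × ℤ) : ℝ :=
  ∑ δ : Fin p → Fin t → steps, Real.exp (∑ n ∈ Finset.Icc s t,
    ∑' x : ℤ × ℤ, cgfp μ (cnt (fun i => walkPath (Y i) (fun k => ((δ i k : ℤ × ℤ))) n) x) β)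

lemma AN_eq [IsProbabilityMeasure μ]
    (hint : ∀ b : ℝ, Integrable (fun x => Real.exp (b * x)) μ)
    (β : ℝ) (s t : ℕ) {p : ℕ} (Y : Fin p → ℤ × ℤ) :
    AN μ β s t p Y = BN μ β s t p Y / ((MM μ β) ^ p) ^ (Finset.Icc s t).card := by
  rw [AN, BN, Finset.sum_div]
  exact Finset.sum_congr rfl fun δ _ =>
    exp_total hint β s t (fun i n => walkPath (Y i) (fun k => ((δ i k : ℤ × ℤ))) n)

lemma AN_translate (μ : Measure ℝ) (β : ℝ) (s t : ℕ) {p : ℕ} (x : ℤ × ℤ) :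
    AN μ β s t p (fun _ => x) = AN μ β s t p (fun _ => (0 : ℤ × ℤ)) := by
  unfold AN
  refine Finset.sum_congr rfl fun δ _ => ?_
  congr 1
  refine Finset.sum_congr rfl fun n _ => ?_
  have hcnt : ∀ y : ℤ × ℤ, cnt (fun i => walkPath x (fun k => ((δ i k : ℤ × ℤ))) n) y
      = cnt (fun i => walkPath 0 (fun k => ((δ i k : ℤ × ℤ))) n) (y - x) := by
    intro y
    unfold cnt
    refine Finset.sum_congr rfl fun i _ => ?_
    have hpath : walkPath x (fun k => ((δ i k : ℤ × ℤ))) n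
        = x + walkPath 0 (fun k => ((δ i k : ℤ × ℤ))) n := by
      rw [walkPath, walkPath, zero_add]
    show (if walkPath x (fun k => ((δ i k : ℤ × ℤ))) n = y then (1 : ℕ) else 0)
      = (if walkPath 0 (fun k => ((δ i k : ℤ × ℤ))) n = y - x then (1 : ℕ) else 0)
    rw [hpath]
    exact if_congr ⟨fun h => eq_sub_of_add_eq' h,
      fun h => by rw [h]; exact add_sub_cancel x y⟩ rfl rfl
  calc ∑' y : ℤ × ℤ, cgfp μ (cnt (fun i => walkPath x (fun k => ((δ i k : ℤ × ℤ))) n) y) β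
      = ∑' y : ℤ × ℤ,
          cgfp μ (cnt (fun i => walkPath 0 (fun k => ((δ i k : ℤ × ℤ))) n) (y - x)) β :=
        tsum_congr fun y => by rw [hcnt y]
    _ = ∑' y : ℤ × ℤ,
          cgfp μ (cnt (fun i => walkPath 0 (fun k => ((δ i k : ℤ × ℤ))) n) y) β :=
        (Equiv.subRight x).tsum_eq
          (fun y => cgfp μ (cnt (fun i => walkPath 0 (fun k => ((δ i k : ℤ × ℤ))) n) y) β)

lemma steps_bound : ∀ v ∈ steps, |v.1| ≤ 1 ∧ |v.2| ≤ 1 := by decide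

lemma walkPath_bound (t : ℕ) (y : ℤ × ℤ) (δ : Fin t → steps) (n : ℕ) :
    |(walkPath y (fun k => ((δ k : ℤ × ℤ))) n).1| ≤ |y.1| + t ∧
    |(walkPath y (fun k => ((δ k : ℤ × ℤ))) n).2| ≤ |y.2| + t := by
  set F := Finset.univ.filter (fun k : Fin t => (k : ℕ) < n) with hF
  have hcard : (F.card : ℤ) ≤ (t : ℤ) := by
    have := Finset.card_filter_le Finset.univ (fun k : Fin t => (k : ℕ) < n)
    simp only [Finset.card_univ, Fintype.card_fin] at this
    exact_mod_cast this
  have habs : ∀ k : Fin t, |((δ k : ℤ × ℤ)).1| ≤ 1 ∧ |((δ k : ℤ × ℤ)).2| ≤ 1 :=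
    fun k => steps_bound _ (δ k).2
  have hs1 : |(∑ k ∈ F, ((δ k : ℤ × ℤ))).1| ≤ (t : ℤ) := by
    rw [Prod.fst_sum]
    refine le_trans (Finset.abs_sum_le_sum_abs _ _) (le_trans ?_ hcard)
    calc ∑ k ∈ F, |((δ k : ℤ × ℤ)).1| ≤ ∑ _k ∈ F, (1 : ℤ) :=
          Finset.sum_le_sum fun k _ => (habs k).1
      _ = F.card := by simp
  have hs2 : |(∑ k ∈ F, ((δ k : ℤ × ℤ))).2| ≤ (t : ℤ) := by
    rw [Prod.snd_sum]
    refine le_trans (Finset.abs_sum_le_sum_abs _ _) (le_trans ?_ hcard)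
    calc ∑ k ∈ F, |((δ k : ℤ × ℤ)).2| ≤ ∑ _k ∈ F, (1 : ℤ) :=
          Finset.sum_le_sum fun k _ => (habs k).2
      _ = F.card := by simp
  constructor
  · rw [walkPath, Prod.fst_add]
    exact le_trans (abs_add_le _ _) (by linarith)
  · rw [walkPath, Prod.snd_add]
    exact le_trans (abs_add_le _ _) (by linarith)

lemma walkPath_mem (t : ℕ) (C : ℤ) (y : ℤ × ℤ) (h1 : |y.1| + (t : ℤ) ≤ C)
    (h2 : |y.2| + (t : ℤ) ≤ C) (δ : Fin t → steps) (n : ℕ) :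
    walkPath y (fun k => ((δ k : ℤ × ℤ))) n
      ∈ Finset.Icc ((-C, -C) : ℤ × ℤ) ((C, C) : ℤ × ℤ) := by
  obtain ⟨b1, b2⟩ := walkPath_bound t y δ n
  have c1 : |(walkPath y (fun k => ((δ k : ℤ × ℤ))) n).1| ≤ C := le_trans b1 h1
  have c2 : |(walkPath y (fun k => ((δ k : ℤ × ℤ))) n).2| ≤ C := le_trans b2 h2
  obtain ⟨d1, d2⟩ := abs_le.mp c1
  obtain ⟨e1, e2⟩ := abs_le.mp c2
  rw [Finset.mem_Icc]
  exact ⟨Prod.mk_le_mk.mpr ⟨d1, e1⟩, Prod.mk_le_mk.mpr ⟨d2, e2⟩⟩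

lemma core (μ : Measure ℝ) [IsProbabilityMeasure μ]
    (hint : ∀ b : ℝ, Integrable (fun x => Real.exp (b * x)) μ)
    (p : ℕ) (β : ℝ) (s t : ℕ) (X : Fin p → ℤ × ℤ) :
    Ewalk p t X (fun S => Real.exp (∑ n ∈ Finset.Icc s t,
        ∑' x : ℤ × ℤ, cgfp μ (∑ i : Fin p, if S i n = x then 1 else 0) β)) ≤
      Ewalk p t (fun _ => 0) (fun S => Real.exp (∑ n ∈ Finset.Icc s t,
        ∑' x : ℤ × ℤ, cgfp μ (∑ i : Fin p, if S i n = x then 1 else 0) β)) := by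
  rcases Nat.eq_zero_or_pos p with hp | hp
  · subst hp
    have hXz : X = fun _ => (0 : ℤ × ℤ) := funext fun i => i.elim0
    rw [hXz]
  · have hE : ∀ Y : Fin p → ℤ × ℤ, Ewalk p t Y (fun S => Real.exp (∑ n ∈ Finset.Icc s t,
        ∑' x : ℤ × ℤ, cgfp μ (∑ i : Fin p, if S i n = x then 1 else 0) β))
          = AN μ β s t p Y / 4 ^ (p * t) := fun Y => rfl
    rw [hE X, hE fun _ => 0]
    have h4 : (0 : ℝ) < 4 ^ (p * t) := by positivity
    refine div_le_div_of_nonneg_right ?_ h4.le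
    set C : ℤ := (t : ℤ) + ∑ i, (|(X i).1| + |(X i).2|) with hC
    set B := Finset.Icc ((-C, -C) : ℤ × ℤ) ((C, C) : ℤ × ℤ) with hB
    have hCb : ∀ j : Fin p, |(X j).1| + (t : ℤ) ≤ C ∧ |(X j).2| + (t : ℤ) ≤ C := by
      intro j
      have hle : |(X j).1| + |(X j).2| ≤ ∑ i, (|(X i).1| + |(X i).2|) :=
        Finset.single_le_sum (f := fun i => |(X i).1| + |(X i).2|)
          (fun i _ => by positivity) (Finset.mem_univ j)
      have n1 : (0 : ℤ) ≤ |(X j).1| := abs_nonneg _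
      have n2 : (0 : ℤ) ≤ |(X j).2| := abs_nonneg _
      omega
    have hX : ∀ i (ε : Fin t → steps) (n : ℕ), n ∈ Finset.Icc s t →
        walkPath (X i) (fun k => ((ε k : ℤ × ℤ))) n ∈ B := fun i ε n _ =>
      walkPath_mem t C (X i) (hCb i).1 (hCb i).2 ε n
    have hD : 0 < ((MM μ β) ^ p) ^ (Finset.Icc s t).card := by
      have := MM_pos hint β
      positivity
    have hp' : ((p : ℝ)) ≠ 0 := Nat.cast_ne_zero.mpr hp.ne'
    calc AN μ β s t p X = BN μ β s t p X / ((MM μ β) ^ p) ^ (Finset.Icc s t).card :=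
          AN_eq hint β s t X
      _ ≤ ((p : ℝ)⁻¹ * ∑ j, BN μ β s t p (fun _ => X j))
            / ((MM μ β) ^ p) ^ (Finset.Icc s t).card :=
          div_le_div_of_nonneg_right (BN_le hint β s t B hp X hX) hD.le
      _ = (p : ℝ)⁻¹ * ∑ j, AN μ β s t p (fun _ => X j) := by
          rw [mul_div_assoc, Finset.sum_div]
          congr 1
          exact Finset.sum_congr rfl fun j _ => (AN_eq hint β s t (fun _ => X j)).symm
      _ = (p : ℝ)⁻¹ * ∑ j : Fin p, AN μ β s t p (fun _ => (0 : ℤ × ℤ)) := by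
          rw [Finset.sum_congr rfl fun j _ => AN_translate μ β s t (X j)]
      _ = AN μ β s t p (fun _ => (0 : ℤ × ℤ)) := by
          rw [Finset.sum_const, Finset.card_univ, Fintype.card_fin, nsmul_eq_mul,
            ← mul_assoc, inv_mul_cancel₀ hp', one_mul]

end Main

section Gauss

open Real

lemma gauss_integrable (b : ℝ) :
    Integrable (fun y => Real.exp (b * y)) (gaussianReal 0 1) := by
  rw [gaussianReal_of_var_ne_zero 0 one_ne_zero]
  rw [integrable_withDensity_iff (measurable_gaussianPDF 0 1)
    (ae_of_all _ fun x => ENNReal.ofReal_lt_top)]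
  have hfun : ∀ y : ℝ, Real.exp (b * y) * ((gaussianPDF 0 1 y).toReal)
      = (√(2 * π))⁻¹ * Real.exp (b ^ 2 / 2) * Real.exp (-(1/2) * (y - b) ^ 2) := by
    intro y
    rw [gaussianPDF, ENNReal.toReal_ofReal (gaussianPDFReal_nonneg 0 1 y), gaussianPDFReal]
    push_cast
    rw [mul_one, mul_one, sub_zero]
    rw [mul_comm (Real.exp (b*y)), mul_assoc, ← Real.exp_add, mul_assoc, ← Real.exp_add]
    ring_nf
  refine ((((integrable_exp_neg_mul_sq (by norm_num : (0:ℝ) < 1/2)).comp_sub_right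
      b).const_mul ((√(2 * π))⁻¹ * Real.exp (b ^ 2 / 2))).congr
    (ae_of_all _ fun y => ?_))
  simpa using (hfun y).symm

lemma MM_gauss (b : ℝ) : MM (gaussianReal 0 1) b = Real.exp (b ^ 2 / 2) := by
  rw [MM, gaussianReal_of_var_ne_zero 0 one_ne_zero]
  have hpdf : (gaussianPDF 0 1)
      = fun y => ((Real.toNNReal (gaussianPDFReal 0 1 y) : NNReal) : ENNReal) := rfl
  rw [hpdf]
  rw [integral_withDensity_eq_integral_smul
    ((measurable_gaussianPDFReal 0 1).real_toNNReal) (fun y => Real.exp (b * y))]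
  have hfun : ∀ y : ℝ, (Real.toNNReal (gaussianPDFReal 0 1 y)) • Real.exp (b * y)
      = ((√(2 * π))⁻¹ * Real.exp (b ^ 2 / 2)) * Real.exp (-(1/2) * (y - b) ^ 2) := by
    intro y
    rw [NNReal.smul_def, smul_eq_mul, Real.coe_toNNReal _ (gaussianPDFReal_nonneg 0 1 y),
      gaussianPDFReal]
    push_cast
    rw [mul_one, mul_one, sub_zero]
    rw [mul_assoc, ← Real.exp_add, mul_assoc, ← Real.exp_add]
    ring_nf
  rw [integral_congr_ae (ae_of_all _ hfun), integral_const_mul]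
  rw [integral_sub_right_eq_self (fun y => Real.exp (-(1/2) * y ^ 2)) b]
  rw [integral_gaussian]
  rw [show π / (1/2) = 2 * π by ring]
  rw [mul_comm, ← mul_assoc, mul_inv_cancel₀ (by positivity), one_mul]

lemma cgfp_gauss (k : ℕ) (β : ℝ) :
    cgfp (gaussianReal 0 1) k β = β ^ 2 * ((k : ℝ) * ((k : ℝ) - 1)) / 2 := by
  rw [cgfp]
  split_ifs with hk
  · rw [cgf_eq_log_MM, cgf_eq_log_MM, MM_gauss, MM_gauss, Real.log_exp, Real.log_exp]
    ring
  · have : k = 0 ∨ k = 1 := by omega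
    rcases this with h | h <;> subst h <;> norm_num

lemma sum_collisions {p : ℕ} (P : Fin p → ℤ × ℤ) :
    ∑ x ∈ occ P, (cnt P x : ℝ) * ((cnt P x : ℝ) - 1)
      = 2 * ∑ i : Fin p, ∑ j : Fin p, (if i < j ∧ P i = P j then (1 : ℝ) else 0) := by
  set f : Fin p → ℤ × ℤ → ℝ := fun i x => if P i = x then 1 else 0 with hf
  have hcast : ∀ x, (cnt P x : ℝ) = ∑ i, f i x := by
    intro x; rw [cnt]; push_cast; rfl
  have hfx : ∀ i, ∑ x ∈ occ P, f i x = 1 := by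
    intro i
    have hmem : P i ∈ occ P := Finset.mem_image.mpr ⟨i, Finset.mem_univ i, rfl⟩
    rw [hf]
    rw [Finset.sum_ite_eq (occ P) (P i) (fun _ => (1 : ℝ)), if_pos hmem]
  have hff : ∀ i j, ∑ x ∈ occ P, f i x * f j x = (if P i = P j then (1 : ℝ) else 0) := by
    intro i j
    by_cases hij : P i = P j
    · rw [if_pos hij]
      have hterm : ∀ x, f i x * f j x = f i x := by
        intro x
        show (if P i = x then (1 : ℝ) else 0) * (if P j = x then (1 : ℝ) else 0)
          = (if P i = x then (1 : ℝ) else 0)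
        by_cases h : P i = x
        · rw [if_pos h, if_pos (hij.symm.trans h), mul_one]
        · rw [if_neg h, zero_mul]
      rw [Finset.sum_congr rfl fun x _ => hterm x, hfx i]
    · rw [if_neg hij]
      apply Finset.sum_eq_zero; intro x _
      show (if P i = x then (1 : ℝ) else 0) * (if P j = x then (1 : ℝ) else 0) = 0
      by_cases h : P i = x
      · rw [if_neg (fun hjx : P j = x => hij (h.trans hjx.symm)), mul_zero]
      · rw [if_neg h, zero_mul]
  have hA : ∑ x ∈ occ P, ∑ i : Fin p, ∑ j : Fin p, f i x * f j x
      = ∑ i : Fin p, ∑ j : Fin p, (if P i = P j then (1 : ℝ) else 0) := by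
    rw [Finset.sum_comm]
    refine Finset.sum_congr rfl fun i _ => ?_
    rw [Finset.sum_comm]
    exact Finset.sum_congr rfl fun j _ => hff i j
  have hB : ∑ x ∈ occ P, ∑ i : Fin p, f i x = (p : ℝ) := by
    rw [Finset.sum_comm, Finset.sum_congr rfl fun i (_ : i ∈ Finset.univ) => hfx i]
    simp
  have hsplit : ∀ i j : Fin p, (if P i = P j then (1 : ℝ) else 0)
      = (if i < j ∧ P i = P j then (1 : ℝ) else 0)
        + (if j < i ∧ P i = P j then (1 : ℝ) else 0)
        + (if i = j then (1 : ℝ) else 0) := by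
    intro i j
    rcases lt_trichotomy i j with h | h | h
    · by_cases hp : P i = P j <;>
        simp [h, h.ne, not_lt_of_gt h, hp]
    · subst h; simp
    · by_cases hp : P i = P j <;>
        simp [h, h.ne', not_lt_of_gt h, hp]
  have hswap : ∑ i : Fin p, ∑ j : Fin p, (if j < i ∧ P i = P j then (1 : ℝ) else 0)
      = ∑ i : Fin p, ∑ j : Fin p, (if i < j ∧ P i = P j then (1 : ℝ) else 0) := by
    rw [Finset.sum_comm]
    refine Finset.sum_congr rfl fun i _ => Finset.sum_congr rfl fun j _ => ?_
    exact if_congr (and_congr Iff.rfl eq_comm) rfl rfl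
  have hdiag : ∑ i : Fin p, ∑ j : Fin p, (if i = j then (1 : ℝ) else 0) = (p : ℝ) := by
    have : ∀ i : Fin p, ∑ j : Fin p, (if i = j then (1 : ℝ) else 0) = 1 := by
      intro i
      rw [Finset.sum_ite_eq Finset.univ i (fun _ => (1 : ℝ)), if_pos (Finset.mem_univ i)]
    rw [Finset.sum_congr rfl fun i _ => this i]
    simp
  calc ∑ x ∈ occ P, (cnt P x : ℝ) * ((cnt P x : ℝ) - 1)
      = ∑ x ∈ occ P, ((∑ i, f i x) * (∑ j, f j x) - ∑ i, f i x) := by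
        refine Finset.sum_congr rfl fun x _ => ?_
        rw [← hcast]; ring
    _ = ∑ x ∈ occ P, ∑ i : Fin p, ∑ j : Fin p, f i x * f j x
          - ∑ x ∈ occ P, ∑ i : Fin p, f i x := by
        rw [← Finset.sum_sub_distrib]
        refine Finset.sum_congr rfl fun x _ => ?_
        rw [Finset.sum_mul_sum]
    _ = ∑ i : Fin p, ∑ j : Fin p, (if P i = P j then (1 : ℝ) else 0) - (p : ℝ) := by
        rw [hA, hB]
    _ = 2 * ∑ i : Fin p, ∑ j : Fin p, (if i < j ∧ P i = P j then (1 : ℝ) else 0) := by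
        rw [Finset.sum_congr rfl fun i (_ : i ∈ Finset.univ) =>
          Finset.sum_congr rfl fun j (_ : j ∈ Finset.univ) => hsplit i j]
        rw [Finset.sum_congr rfl fun i (_ : i ∈ Finset.univ) =>
          (Finset.sum_add_distrib (s := Finset.univ))]
        rw [Finset.sum_add_distrib]
        rw [Finset.sum_congr rfl fun i (_ : i ∈ Finset.univ) =>
          (Finset.sum_add_distrib (s := Finset.univ))]
        rw [Finset.sum_add_distrib]
        rw [hswap, hdiag]
        ring

lemma tsum_pairs (β : ℝ) {p : ℕ} (P : Fin p → ℤ × ℤ) :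
    ∑' x : ℤ × ℤ, cgfp (gaussianReal 0 1) (cnt P x) β
      = β ^ 2 * ∑ i : Fin p, ∑ j : Fin p, (if i < j ∧ P i = P j then (1 : ℝ) else 0) := by
  rw [tsum_cgfp_eq]
  rw [Finset.sum_congr rfl fun x _ => cgfp_gauss (cnt P x) β]
  have h : ∑ x ∈ occ P, β ^ 2 * ((cnt P x : ℝ) * ((cnt P x : ℝ) - 1)) / 2
      = β ^ 2 / 2 * ∑ x ∈ occ P, (cnt P x : ℝ) * ((cnt P x : ℝ) - 1) := by
    rw [Finset.mul_sum]
    exact Finset.sum_congr rfl fun x _ => by ring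
  rw [h, sum_collisions P]
  ring

end Gauss



theorem stmt9
    (μ : Measure ℝ) (hμ : EnvLaw μ)
    (p : ℕ) (β : ℝ) (hβ : 0 ≤ β) (s t : ℕ) (hs : 1 ≤ s) (hst : s ≤ t)
    (X : Fin p → ℤ × ℤ) :
    (Ewalk p t X (fun S => Real.exp (∑ n ∈ Finset.Icc s t,
        ∑' x : ℤ × ℤ, cgfp μ (∑ i : Fin p, if S i n = x then 1 else 0) β)) ≤
      Ewalk p t (fun _ => 0) (fun S => Real.exp (∑ n ∈ Finset.Icc s t,
        ∑' x : ℤ × ℤ, cgfp μ (∑ i : Fin p, if S i n = x then 1 else 0) β))) ∧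
    (Ewalk p t X (fun S => Real.exp (β ^ 2 * pairSum p s t S)) ≤
      Ewalk p t (fun _ => 0) (fun S => Real.exp (β ^ 2 * pairSum p s t S))) := by
  constructor
  · haveI := hμ.prob
    exact core μ hμ.exp_moments p β s t X
  · have hint : ∀ b : ℝ, Integrable (fun x => Real.exp (b * x)) (gaussianReal 0 1) :=
      gauss_integrable
    have hfun : ∀ S : Fin p → ℕ → ℤ × ℤ,
        Real.exp (β ^ 2 * pairSum p s t S)
          = Real.exp (∑ n ∈ Finset.Icc s t, ∑' x : ℤ × ℤ,
              cgfp (gaussianReal 0 1) (∑ i : Fin p, if S i n = x then 1 else 0) β) := by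
      intro S
      congr 1
      rw [pairSum, Finset.mul_sum]
      exact Finset.sum_congr rfl fun n _ => (tsum_pairs β (fun i => S i n)).symm
    have hcongr : ∀ Y : Fin p → ℤ × ℤ,
        Ewalk p t Y (fun S => Real.exp (β ^ 2 * pairSum p s t S))
          = Ewalk p t Y (fun S => Real.exp (∑ n ∈ Finset.Icc s t, ∑' x : ℤ × ℤ,
              cgfp (gaussianReal 0 1) (∑ i : Fin p, if S i n = x then 1 else 0) β)) := by
      intro Y
      unfold Ewalk
      congr 1
      exact Finset.sum_congr rfl fun δ _ => hfun _
    rw [hcongr X, hcongr fun _ => 0]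
    exact core (gaussianReal 0 1) hint p β s t X


end DP
end
end

section
/- Let μ be a probability law on ℝ with mean 0, variance 1 and finite exponential moments, and set Λ(β) := log E[e^{βω}] for ω ∼ μ and Λ_p(β) := Λ(pβ) − pΛ(β). For every q₀ > 0 there exists a constant C = C(μ,q₀) > 0 such that for all integers p ≥ 1 and all β > 0 with pβ ≤ q₀: Λ_p(β) ≤ (1 + C·p·β) · β² · p(p−1)/2. -/
open MeasureTheory ProbabilityTheory Filter Finset

noncomputable section

namespace DP

section DPaux
open MeasureTheory Real

lemma exp_quad_bound' (u : ℝ) : |Real.exp u - (1 + u + u^2/2)| ≤ |u|^3 * Real.exp |u| := by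
  rcases le_or_gt |u| 1 with h | h
  · have hb := Real.exp_bound h (n := 3) (by norm_num)
    have hs : ∑ i ∈ Finset.range 3, u ^ i / (Nat.factorial i : ℝ) = 1 + u + u^2/2 := by
      simp [Finset.sum_range_succ, Nat.factorial]
    rw [hs] at hb
    have h1 : (1:ℝ) ≤ Real.exp |u| := Real.one_le_exp (abs_nonneg u)
    have h2 : (0:ℝ) ≤ |u|^3 := by positivity
    have h3 : (((Nat.succ 3) : ℝ) / ((Nat.factorial 3 : ℕ) * (3:ℕ)) : ℝ) = 2/9 := by
      norm_num [Nat.factorial]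
    rw [h3] at hb
    nlinarith
  · rw [abs_le]
    rcases le_or_gt 0 u with hu | hu
    · rw [abs_of_nonneg hu] at h ⊢
      have hq := Real.quadratic_le_exp_of_nonneg hu
      have h3 : (1:ℝ) ≤ u^3 := by nlinarith
      have he : (0:ℝ) < Real.exp u := Real.exp_pos u
      constructor
      · nlinarith
      · nlinarith
    · rw [abs_of_neg hu] at h ⊢
      set v := -u with hv
      clear_value v
      have hv1 : 1 < v := h
      have he : Real.exp (-v) ≤ 1 := Real.exp_le_one_iff.mpr (by linarith)
      have he0 : 0 < Real.exp (-v) := Real.exp_pos _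
      have hev : 1 ≤ Real.exp v := Real.one_le_exp (by linarith)
      have h32 : v^2 ≤ v^3 := by
        nlinarith [mul_nonneg (sq_nonneg v) (by linarith : (0:ℝ) ≤ v - 1)]
      have hv2 : 1 ≤ v^2 := by nlinarith [sq_nonneg (v-1)]
      have hv3 : 1 ≤ v^3 := by linarith
      have hve : v^3 ≤ v^3 * Real.exp v := by nlinarith
      have hu' : u = -v := by rw [hv]; ring
      rw [hu']
      constructor
      · have : (0:ℝ) ≤ v^2 := sq_nonneg v
        linarith
      · linarith [sq_nonneg (v-1)]

lemma cube_le_exp' {y : ℝ} (hy : 0 ≤ y) : y^3 ≤ 6 * Real.exp y := by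
  have := Real.sum_le_exp_of_nonneg hy 4
  have hs : ∑ i ∈ Finset.range 4, y ^ i / (Nat.factorial i : ℝ)
      = 1 + y + y^2/2 + y^3/6 := by
    simp [Finset.sum_range_succ, Nat.factorial]
  rw [hs] at this
  nlinarith [sq_nonneg y]

variable {μ : Measure ℝ} [IsProbabilityMeasure μ]
  (hexp : ∀ β : ℝ, Integrable (fun x => Real.exp (β * x)) μ)
include hexp

lemma integ_exp_abs' (c : ℝ) : Integrable (fun x => Real.exp (c * |x|)) μ := by
  refine ((hexp c).add (hexp (-c))).mono
    (Real.continuous_exp.comp (continuous_const.mul continuous_abs)).aestronglyMeasurable ?_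
  refine Filter.Eventually.of_forall fun x => ?_
  simp only [Pi.add_apply, Real.norm_eq_abs]
  have hb : (0:ℝ) ≤ Real.exp (c*x) + Real.exp (-c*x) := by positivity
  rw [abs_of_nonneg (Real.exp_nonneg _), abs_of_nonneg hb]
  rcases abs_choice x with h | h
  · rw [h]; nlinarith [Real.exp_pos (-c * x)]
  · rw [h, show c * -x = -c * x by ring]; nlinarith [Real.exp_pos (c * x)]

lemma integ_g' (q₀ : ℝ) : Integrable (fun x => |x|^3 * Real.exp (q₀ * |x|)) μ := by
  refine ((integ_exp_abs' hexp (q₀+1)).const_mul 6).mono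
    (((continuous_abs.pow 3).mul
      (Real.continuous_exp.comp (continuous_const.mul continuous_abs))).aestronglyMeasurable) ?_
  refine Filter.Eventually.of_forall fun x => ?_
  have h1 : |x|^3 ≤ 6 * Real.exp |x| := cube_le_exp' (abs_nonneg x)
  have h2 : (0:ℝ) < Real.exp (q₀ * |x|) := Real.exp_pos _
  have e1 : ‖|x|^3 * Real.exp (q₀ * |x|)‖ = |x|^3 * Real.exp (q₀ * |x|) :=
    Real.norm_of_nonneg (by positivity)
  have e2 : ‖6 * Real.exp ((q₀+1) * |x|)‖ = 6 * Real.exp ((q₀+1) * |x|) :=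
    Real.norm_of_nonneg (by positivity)
  rw [e1, e2, show (q₀+1) * |x| = q₀ * |x| + |x| by ring, Real.exp_add]
  nlinarith

lemma integ_id' : Integrable (fun x : ℝ => x) μ := by
  refine (integ_exp_abs' hexp 1).mono measurable_id.aestronglyMeasurable ?_
  refine Filter.Eventually.of_forall fun x => ?_
  have h1 := Real.add_one_le_exp |x|
  simp only [Real.norm_eq_abs, one_mul]
  rw [abs_of_nonneg (Real.exp_nonneg _)]
  linarith

lemma integ_sq' : Integrable (fun x : ℝ => x^2) μ := by
  refine ((integ_exp_abs' hexp 1).const_mul 2).mono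
    (continuous_pow 2).aestronglyMeasurable ?_
  refine Filter.Eventually.of_forall fun x => ?_
  have h1 := Real.quadratic_le_exp_of_nonneg (abs_nonneg x)
  simp only [Real.norm_eq_abs, one_mul]
  rw [abs_of_nonneg (sq_nonneg x), abs_of_nonneg (by positivity : (0:ℝ) ≤ 2 * Real.exp |x|),
    ← sq_abs]
  nlinarith [abs_nonneg x]

end DPaux

open MeasureTheory Real in
lemma mgf_bounds' (μ : Measure ℝ) [IsProbabilityMeasure μ]
    (hexp : ∀ β : ℝ, Integrable (fun x => Real.exp (β * x)) μ)
    (hmean : ∫ x, x ∂μ = 0) (hvar : ∫ x, x ^ 2 ∂μ = 1)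
    (q₀ : ℝ) (hq₀ : 0 < q₀) :
    ∀ t : ℝ, 0 < t → t ≤ q₀ →
      (∫ x, Real.exp (t*x) ∂μ ≤ 1 + t^2/2 + t^3 * (∫ x, |x|^3 * Real.exp (q₀*|x|) ∂μ)
      ∧ 1 + t^2/2 - t^3 * (∫ x, |x|^3 * Real.exp (q₀*|x|) ∂μ) ≤ ∫ x, Real.exp (t*x) ∂μ
      ∧ 1 ≤ ∫ x, Real.exp (t*x) ∂μ) := by
  intro t ht htq
  have hg := integ_g' hexp q₀
  have hid := integ_id' hexp
  have hsq := integ_sq' hexp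
  have hint1 : Integrable (fun x : ℝ => 1 + t*x) μ :=
    (integrable_const 1).add (hid.const_mul t)
  have hint_poly : Integrable (fun x : ℝ => 1 + t*x + t^2/2*x^2) μ :=
    hint1.add (hsq.const_mul (t^2/2))
  have hI1 : ∫ x, (1 + t*x) ∂μ = 1 := by
    rw [integral_add (integrable_const 1) (hid.const_mul t), integral_const,
      integral_const_mul, hmean]
    simp
  have hpoly : ∫ x, (1 + t*x + t^2/2*x^2) ∂μ = 1 + t^2/2 := by
    rw [integral_add hint1 (hsq.const_mul (t^2/2)), hI1, integral_const_mul, hvar]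
    ring
  have hpt : ∀ x : ℝ, |Real.exp (t*x) - (1 + t*x + (t*x)^2/2)|
      ≤ t^3 * (|x|^3 * Real.exp (q₀*|x|)) := by
    intro x
    have h1 := exp_quad_bound' (t*x)
    have habs : |t*x| = t*|x| := by rw [abs_mul, abs_of_pos ht]
    rw [habs] at h1
    have hbd : (t*|x|)^3 * Real.exp (t*|x|) ≤ t^3 * (|x|^3 * Real.exp (q₀*|x|)) := by
      rw [mul_pow, mul_assoc]
      gcongr
    exact h1.trans hbd
  refine ⟨?_, ?_, ?_⟩
  · calc ∫ x, Real.exp (t*x) ∂μ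
        ≤ ∫ x, (1 + t*x + t^2/2*x^2 + t^3*(|x|^3 * Real.exp (q₀*|x|))) ∂μ := by
          refine integral_mono (hexp t) (hint_poly.add (hg.const_mul (t^3))) fun x => ?_
          have := (abs_le.mp (hpt x)).2
          nlinarith [this]
      _ = 1 + t^2/2 + t^3 * (∫ x, |x|^3 * Real.exp (q₀*|x|) ∂μ) := by
          rw [integral_add hint_poly (hg.const_mul (t^3)), hpoly, integral_const_mul]
  · calc 1 + t^2/2 - t^3 * (∫ x, |x|^3 * Real.exp (q₀*|x|) ∂μ)
        = ∫ x, (1 + t*x + t^2/2*x^2 - t^3*(|x|^3 * Real.exp (q₀*|x|))) ∂μ := by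
          rw [integral_sub hint_poly (hg.const_mul (t^3)), hpoly, integral_const_mul]
      _ ≤ ∫ x, Real.exp (t*x) ∂μ := by
          refine integral_mono (hint_poly.sub (hg.const_mul (t^3))) (hexp t) fun x => ?_
          have := (abs_le.mp (hpt x)).1
          nlinarith [this]
  · calc (1:ℝ) = ∫ x, (1 + t*x) ∂μ := hI1.symm
      _ ≤ ∫ x, Real.exp (t*x) ∂μ := by
          refine integral_mono hint1 (hexp t) fun x => ?_
          have := Real.add_one_le_exp (t*x)
          simp only
          linarith


set_option maxHeartbeats 1000000 in
theorem stmt10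
    (μ : Measure ℝ) (hμ : EnvLaw μ) (q₀ : ℝ) (hq₀ : 0 < q₀) :
    ∃ C : ℝ, 0 < C ∧ ∀ p : ℕ, 1 ≤ p → ∀ β : ℝ, 0 < β → (p : ℝ) * β ≤ q₀ →
      cgfp μ p β ≤ (1 + C * p * β) * (β ^ 2 * ((p : ℝ) * ((p : ℝ) - 1)) / 2) := by
  haveI := hμ.prob
  set A : ℝ := ∫ x, |x|^3 * Real.exp (q₀*|x|) ∂μ with hA_def
  have hA0 : 0 ≤ A := integral_nonneg fun x => by positivity
  set K : ℝ := A + q₀*(1/2 + q₀*A)^2 with hK_def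
  have hK0 : 0 ≤ K := by positivity
  refine ⟨4*(A+K)+1, by positivity, ?_⟩
  have hcgf_up : ∀ t : ℝ, 0 < t → t ≤ q₀ → DP.cgf μ t ≤ t^2/2 + t^3*A := by
    intro t ht htq
    obtain ⟨hup, -, h1m⟩ := mgf_bounds' μ hμ.exp_moments hμ.mean_zero hμ.variance_one q₀ hq₀ t ht htq
    have hm0 : (0:ℝ) < ∫ x, Real.exp (t*x) ∂μ := lt_of_lt_of_le one_pos h1m
    have := Real.log_le_sub_one_of_pos hm0
    show Real.log (∫ x, Real.exp (t*x) ∂μ) ≤ t^2/2 + t^3*A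
    linarith
  have hcgf_lo : ∀ t : ℝ, 0 < t → t ≤ q₀ → t^2/2 - t^3*K ≤ DP.cgf μ t := by
    intro t ht htq
    obtain ⟨hup, hlo, h1m⟩ := mgf_bounds' μ hμ.exp_moments hμ.mean_zero hμ.variance_one q₀ hq₀ t ht htq
    set m : ℝ := ∫ x, Real.exp (t*x) ∂μ with hm_def
    have hm0 : (0:ℝ) < m := lt_of_lt_of_le one_pos h1m
    have hlog : 1 - m⁻¹ ≤ Real.log m := by
      have := Real.log_le_sub_one_of_pos (inv_pos.mpr hm0)
      rw [Real.log_inv] at this; linarith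
    have hid : 1 - m⁻¹ - ((m-1) - (m-1)^2) = (m-1)^3 / m := by
      field_simp; ring
    have h3 : 0 ≤ (m-1)^3 / m := div_nonneg (by nlinarith) hm0.le
    have hsq : (m-1)^2 ≤ (t^2/2 + t^3*A)^2 := by nlinarith
    rw [← hA_def] at hup hlo
    have e1 : t^4 ≤ t^3*q₀ := by
      nlinarith [mul_nonneg (pow_nonneg ht.le 3) (sub_nonneg.mpr htq)]
    have e2 : (1/2+t*A)^2 ≤ (1/2+q₀*A)^2 := by
      have h' : t*A ≤ q₀*A := mul_le_mul_of_nonneg_right htq hA0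
      nlinarith [mul_nonneg (sub_nonneg.mpr h')
        (add_nonneg (add_nonneg (by norm_num : (0:ℝ) ≤ 1) (mul_nonneg ht.le hA0))
          (mul_nonneg hq₀.le hA0))]
    have hbound : (t^2/2 + t^3*A)^2 ≤ t^3 * (q₀*(1/2 + q₀*A)^2) := by
      have key1 : (t^2/2 + t^3*A)^2 = t^4 * (1/2 + t*A)^2 := by ring
      have key2 : t^4 * (1/2+t*A)^2 ≤ t^3*q₀ * (1/2+t*A)^2 :=
        mul_le_mul_of_nonneg_right e1 (sq_nonneg _)
      have key3 : t^3*q₀ * (1/2+t*A)^2 ≤ t^3*q₀ * (1/2+q₀*A)^2 :=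
        mul_le_mul_of_nonneg_left e2 (by positivity)
      rw [key1]
      calc t^4 * (1/2+t*A)^2 ≤ t^3*q₀ * (1/2+t*A)^2 := key2
        _ ≤ t^3*q₀ * (1/2+q₀*A)^2 := key3
        _ = t^3 * (q₀*(1/2 + q₀*A)^2) := by ring
    show t^2/2 - t^3*K ≤ Real.log m
    rw [hK_def]
    linarith
  clear_value A
  clear hA_def
  clear_value K
  clear hK_def
  intro p hp β hβ hpβ
  by_cases h2p : 2 ≤ p
  · have hp2 : (2:ℝ) ≤ (p:ℝ) := by exact_mod_cast h2p
    set P : ℝ := (p:ℝ) with hP_def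
    have hP0 : (0:ℝ) < P := by linarith
    have ht : 0 < P * β := mul_pos hP0 hβ
    have hβq : β ≤ q₀ := by nlinarith
    have h1 := hcgf_up (P*β) ht hpβ
    have h2 := hcgf_lo β hβ hβq
    rw [cgfp, if_pos h2p]
    have c2 : P*(β^2/2 - β^3*K) ≤ P * DP.cgf μ β := mul_le_mul_of_nonneg_left h2 hP0.le
    have e2 : P^3 ≤ 2*P^2*(P-1) := by nlinarith [sq_nonneg P]
    have hP3 : P ≤ P^3 := by nlinarith
    have key : P^3*A + P*K ≤ (4*(A+K)+1) * (P^2*(P-1)/2) := by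
      nlinarith [mul_le_mul_of_nonneg_right e2 hA0, mul_le_mul_of_nonneg_right hP3 hK0,
        mul_le_mul_of_nonneg_right e2 hK0,
        mul_nonneg (mul_nonneg (sq_nonneg P) (by linarith : (0:ℝ) ≤ P - 1)) (add_nonneg hA0 hK0)]
    have keyβ : (P^3*A + P*K) * β^3 ≤ ((4*(A+K)+1) * (P^2*(P-1)/2)) * β^3 :=
      mul_le_mul_of_nonneg_right key (by positivity)
    linarith [h1, c2, keyβ]
  · have hp1 : p = 1 := by omega
    subst hp1
    rw [cgfp, if_neg h2p]
    norm_num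

end DP
end
end

section
/- Let S¹,…,S^q be independent simple random walks on ℤ². For n ≥ 1 let m_n^q := #{ i ∈ {1,…,q} : there exists j ≠ i with S_n^i = S_n^j } and A_{n,p} := { m_n^q ≤ p }. Then for all integers p, q ≥ 2 and all n ≥ 1: sup over X ∈ (ℤ²)^q of P_X^{⊗q}( A_{n,p}^c ) ≤ q^p · n^{−p/3}. -/
open MeasureTheory ProbabilityTheory Filter Finset

noncomputable section

namespace DP

lemma cb_bound (n : ℕ) : (3*n+1) * (Nat.centralBinom n)^2 ≤ 16^n := by
  induction n with
  | zero => simp [Nat.centralBinom]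
  | succ n ih =>
    have key : (n+1) * Nat.centralBinom (n+1) = 2 * (2*n+1) * Nat.centralBinom n :=
      Nat.succ_mul_centralBinom_succ n
    have h1 : (n+1)^2 * ((3*(n+1)+1) * (Nat.centralBinom (n+1))^2)
        = (3*n+4) * (2*(2*n+1))^2 * (Nat.centralBinom n)^2 := by
      have : ((n+1) * Nat.centralBinom (n+1))^2 = (2 * (2*n+1) * Nat.centralBinom n)^2 := by
        rw [key]
      ring_nf
      ring_nf at this
      nlinarith [this]
    have h2 : (3*n+4) * (2*(2*n+1))^2 ≤ 16 * (n+1)^2 * (3*n+1) := by nlinarith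
    have h3 : (n+1)^2 * ((3*(n+1)+1) * (Nat.centralBinom (n+1))^2)
        ≤ (n+1)^2 * (16^(n+1)) := by
      calc (n+1)^2 * ((3*(n+1)+1) * (Nat.centralBinom (n+1))^2)
          = (3*n+4) * (2*(2*n+1))^2 * (Nat.centralBinom n)^2 := h1
        _ ≤ 16 * (n+1)^2 * (3*n+1) * (Nat.centralBinom n)^2 := by
            exact Nat.mul_le_mul_right _ h2
        _ = (n+1)^2 * (16 * ((3*n+1) * (Nat.centralBinom n)^2)) := by ring
        _ ≤ (n+1)^2 * (16 * 16^n) := by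
            exact Nat.mul_le_mul_left _ (Nat.mul_le_mul_left _ ih)
        _ = (n+1)^2 * 16^(n+1) := by ring
    exact Nat.le_of_mul_le_mul_left h3 (by positivity)


lemma card_trues {J : Type*} [Fintype J] [DecidableEq J] (j : ℕ) :
    (univ.filter (fun γ : J → Bool => (univ.filter (fun i => γ i)).card = j)).card
      = (Fintype.card J).choose j := by
  rw [← Finset.card_univ, ← Finset.card_powersetCard j (univ : Finset J)]
  refine Finset.card_nbij' (fun γ => univ.filter (fun i => γ i = true))
    (fun s => fun i => decide (i ∈ s)) ?_ ?_ ?_ ?_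
  · intro γ hγ
    simp only [Finset.mem_coe, mem_filter, mem_univ, true_and] at hγ
    simp only [Finset.mem_coe, Finset.mem_powersetCard]
    exact ⟨Finset.subset_univ _, hγ⟩
  · intro s hs
    simp only [Finset.mem_coe, mem_filter, mem_univ, true_and]
    simp only [Finset.mem_coe, Finset.mem_powersetCard] at hs
    have : filter (fun i => decide (i ∈ s) = true) univ = s := by ext i; simp
    rw [this]; exact hs.2
  · intro γ _
    funext i
    simp
  · intro s hs
    simp only [Finset.mem_coe, Finset.mem_powersetCard] at hs
    ext i
    simp

def eps (b : Bool) : ℤ := if b then 1 else -1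

lemma sum_eps {J : Type*} [Fintype J] [DecidableEq J] (γ : J → Bool) :
    ∑ i, eps (γ i) = 2 * ((univ.filter (fun i => γ i)).card : ℤ) - Fintype.card J := by
  classical
  rw [← Finset.sum_filter_add_sum_filter_not univ (fun i => γ i = true)]
  have h1 : ∀ i ∈ univ.filter (fun i => γ i = true), eps (γ i) = 1 := by
    intro i hi; simp only [mem_filter] at hi; simp [eps, hi.2]
  have h2 : ∀ i ∈ univ.filter (fun i => ¬ (γ i = true)), eps (γ i) = -1 := by
    intro i hi; simp only [mem_filter, Bool.not_eq_true] at hi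
    simp [eps, hi.2]
  rw [Finset.sum_congr rfl h1, Finset.sum_congr rfl h2]
  simp only [Finset.sum_const, nsmul_eq_mul, mul_one, mul_neg_one]
  have := Finset.card_filter_add_card_filter_not (s := (univ : Finset J))
    (p := fun i => γ i = true)
  rw [Finset.card_univ] at this
  have h3 : ((univ.filter (fun i => ¬ (γ i = true))).card : ℤ)
      = (Fintype.card J : ℤ) - (univ.filter (fun i => γ i = true)).card := by
    omega
  push_cast
  rw [h3]
  ring

lemma fixed_sum_card {J : Type*} [Fintype J] [DecidableEq J] (c : ℤ) :
    ((univ : Finset (J → Bool)).filter (fun γ => ∑ i, eps (γ i) = c)).card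
      ≤ (Fintype.card J).choose ((c + Fintype.card J) / 2).toNat := by
  rw [← card_trues]
  apply Finset.card_le_card
  intro γ hγ
  simp only [mem_filter, mem_univ, true_and] at hγ ⊢
  rw [sum_eps] at hγ
  omega

lemma g_bound (n : ℕ) (c : ℤ) :
    ((univ : Finset ((Fin n → Bool) × (Fin n → Bool))).filter
        (fun ab => (∑ k, eps (ab.1 k)) - (∑ k, eps (ab.2 k)) = c)).card
      ≤ Nat.centralBinom n := by
  classical
  calc ((univ : Finset ((Fin n → Bool) × (Fin n → Bool))).filter
        (fun ab => (∑ k, eps (ab.1 k)) - (∑ k, eps (ab.2 k)) = c)).card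
      ≤ ((univ : Finset (Fin n ⊕ Fin n → Bool)).filter
          (fun γ => ∑ i, eps (γ i) = c)).card := by
        apply Finset.card_le_card_of_injOn (fun ab => Sum.elim ab.1 (fun i => ! ab.2 i))
        · intro ab hab
          simp only [Finset.mem_coe, mem_filter, mem_univ, true_and] at hab ⊢
          rw [Fintype.sum_sum_type]
          simp only [Sum.elim_inl, Sum.elim_inr]
          have : ∀ k, eps (! ab.2 k) = - eps (ab.2 k) := by
            intro k; cases ab.2 k <;> simp [eps]
          rw [Finset.sum_congr rfl (fun k _ => this k), Finset.sum_neg_distrib]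
          omega
        · intro a _ b _ hab
          have h1 : ∀ k, a.1 k = b.1 k := fun k => congrFun hab (Sum.inl k)
          have h2 : ∀ k, (! a.2 k) = (! b.2 k) := fun k => congrFun hab (Sum.inr k)
          have h2' : ∀ k, a.2 k = b.2 k := by
            intro k; have := h2 k; simpa using this
          exact Prod.ext (funext h1) (funext h2')
    _ ≤ (Fintype.card (Fin n ⊕ Fin n)).choose _ := fixed_sum_card c
    _ ≤ Nat.centralBinom n := by
        simp only [Fintype.card_sum, Fintype.card_fin]
        rw [show n + n = 2 * n by ring]
        exact Nat.choose_le_centralBinom _ n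


def ub (s : steps) : Bool := decide ((s : ℤ × ℤ).1 + (s : ℤ × ℤ).2 = 1)
def vb (s : steps) : Bool := decide ((s : ℤ × ℤ).1 - (s : ℤ × ℤ).2 = 1)

lemma steps_cases (s : steps) :
    (s : ℤ × ℤ) = (1,0) ∨ (s : ℤ × ℤ) = (-1,0) ∨ (s : ℤ × ℤ) = (0,1) ∨ (s : ℤ × ℤ) = (0,-1) := by
  have h := s.2
  simp only [steps, Finset.mem_insert, Finset.mem_singleton] at h
  exact h

lemma eps_ub (s : steps) : eps (ub s) = (s : ℤ × ℤ).1 + (s : ℤ × ℤ).2 := by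
  rcases steps_cases s with h | h | h | h <;> simp [ub, eps, h]

lemma eps_vb (s : steps) : eps (vb s) = (s : ℤ × ℤ).1 - (s : ℤ × ℤ).2 := by
  rcases steps_cases s with h | h | h | h <;> simp [vb, eps, h]

lemma uv_det (s t : steps) (hu : ub s = ub t) (hv : vb s = vb t) : s = t := by
  have h1 : (s : ℤ × ℤ).1 + (s : ℤ × ℤ).2 = (t : ℤ × ℤ).1 + (t : ℤ × ℤ).2 := by
    rw [← eps_ub, ← eps_ub, hu]
  have h2 : (s : ℤ × ℤ).1 - (s : ℤ × ℤ).2 = (t : ℤ × ℤ).1 - (t : ℤ × ℤ).2 := by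
    rw [← eps_vb, ← eps_vb, hv]
  have : (s : ℤ × ℤ) = (t : ℤ × ℤ) := Prod.ext (by omega) (by omega)
  exact Subtype.coe_injective this

lemma pairCount_le (n : ℕ) (d : ℤ × ℤ) :
    ((univ : Finset ((Fin n → steps) × (Fin n → steps))).filter
        (fun ab => (∑ k, ((ab.1 k : ℤ × ℤ))) = (∑ k, ((ab.2 k : ℤ × ℤ))) + d)).card
      ≤ Nat.centralBinom n ^ 2 := by
  classical
  set T1 := ((univ : Finset ((Fin n → Bool) × (Fin n → Bool))).filter
      (fun ab => (∑ k, eps (ab.1 k)) - (∑ k, eps (ab.2 k)) = d.1 + d.2)) with hT1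
  set T2 := ((univ : Finset ((Fin n → Bool) × (Fin n → Bool))).filter
      (fun ab => (∑ k, eps (ab.1 k)) - (∑ k, eps (ab.2 k)) = d.1 - d.2)) with hT2
  have hle : ((univ : Finset ((Fin n → steps) × (Fin n → steps))).filter
        (fun ab => (∑ k, ((ab.1 k : ℤ × ℤ))) = (∑ k, ((ab.2 k : ℤ × ℤ))) + d)).card
      ≤ (T1 ×ˢ T2).card := by
    apply Finset.card_le_card_of_injOn
      (fun ab => (((fun k => ub (ab.1 k)), (fun k => ub (ab.2 k))),
                  ((fun k => vb (ab.1 k)), (fun k => vb (ab.2 k)))))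
    · intro ab hab
      simp only [Finset.mem_coe, mem_filter, mem_univ, true_and] at hab
      have h1 : (∑ k, ((ab.1 k : ℤ × ℤ))).1 = (∑ k, ((ab.2 k : ℤ × ℤ))).1 + d.1 := by
        rw [hab]; rfl
      have h2 : (∑ k, ((ab.1 k : ℤ × ℤ))).2 = (∑ k, ((ab.2 k : ℤ × ℤ))).2 + d.2 := by
        rw [hab]; rfl
      rw [Prod.fst_sum, Prod.fst_sum] at h1
      rw [Prod.snd_sum, Prod.snd_sum] at h2
      simp only [Finset.mem_coe, Finset.mem_product, hT1, hT2, mem_filter, mem_univ, true_and]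
      constructor
      · simp only [eps_ub, Finset.sum_add_distrib]
        omega
      · simp only [eps_vb, Finset.sum_sub_distrib]
        omega
    · intro a _ b _ hab
      simp only [Prod.mk.injEq] at hab
      obtain ⟨⟨hu1, hu2⟩, hv1, hv2⟩ := hab
      refine Prod.ext (funext fun k => ?_) (funext fun k => ?_)
      · exact uv_det _ _ (congrFun hu1 k) (congrFun hv1 k)
      · exact uv_det _ _ (congrFun hu2 k) (congrFun hv2 k)
  calc _ ≤ (T1 ×ˢ T2).card := hle
    _ = T1.card * T2.card := Finset.card_product _ _
    _ ≤ Nat.centralBinom n * Nat.centralBinom n :=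
        Nat.mul_le_mul (g_bound n _) (g_bound n _)
    _ = Nat.centralBinom n ^ 2 := (sq _).symm

lemma B_count (n q k : ℕ) (X : Fin q → ℤ × ℤ) (f g : Fin k → Fin q)
    (hf : Function.Injective f) (hg : Function.Injective g)
    (hfg : ∀ l l', f l ≠ g l') :
    ((univ : Finset (Fin q → Fin n → steps)).filter
        (fun δ => ∀ l, X (f l) + ∑ m, ((δ (f l) m : ℤ × ℤ))
            = X (g l) + ∑ m, ((δ (g l) m : ℤ × ℤ)))).card
      ≤ (Nat.centralBinom n ^ 2) ^ k * (4 ^ n) ^ (q - 2 * k) := by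
  classical
  set P : Fin k → Finset ((Fin n → steps) × (Fin n → steps)) := fun l =>
    univ.filter (fun ab => (∑ m, ((ab.1 m : ℤ × ℤ)))
      = (∑ m, ((ab.2 m : ℤ × ℤ))) + (X (g l) - X (f l))) with hP
  set C : Finset (Fin q) := univ \ (Finset.image f univ ∪ Finset.image g univ) with hC
  have hmain : ((univ : Finset (Fin q → Fin n → steps)).filter
        (fun δ => ∀ l, X (f l) + ∑ m, ((δ (f l) m : ℤ × ℤ))
            = X (g l) + ∑ m, ((δ (g l) m : ℤ × ℤ)))).card
      ≤ ((Fintype.piFinset P) ×ˢ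
          (univ : Finset ({i // i ∈ C} → (Fin n → steps)))).card := by
    apply Finset.card_le_card_of_injOn
      (fun δ => (fun l => (δ (f l), δ (g l)), fun i => δ i.1))
    · intro δ hδ
      simp only [Finset.mem_coe, mem_filter, mem_univ, true_and] at hδ
      simp only [Finset.mem_coe, Finset.mem_product, Fintype.mem_piFinset, mem_univ, and_true]
      intro l
      simp only [hP, mem_filter, mem_univ, true_and]
      linear_combination (hδ l)
    · intro δ1 h1 δ2 h2 hΦ
      simp only [Prod.mk.injEq] at hΦ
      obtain ⟨hpair, hrest⟩ := hΦ
      funext i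
      by_cases hi : i ∈ C
      · exact congrFun hrest ⟨i, hi⟩
      · simp only [hC, Finset.mem_sdiff, mem_univ, true_and, not_not,
          Finset.mem_union, Finset.mem_image] at hi
        rcases hi with ⟨l, _, rfl⟩ | ⟨l, _, rfl⟩
        · exact congrArg Prod.fst (congrFun hpair l)
        · exact congrArg Prod.snd (congrFun hpair l)
  have hCcard : C.card = q - 2 * k := by
    rw [hC, Finset.card_sdiff_of_subset (Finset.subset_univ _), Finset.card_univ, Fintype.card_fin]
    congr 1
    rw [Finset.card_union_of_disjoint, Finset.card_image_of_injective _ hf,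
      Finset.card_image_of_injective _ hg, Finset.card_univ, Fintype.card_fin]
    · ring
    · rw [Finset.disjoint_left]
      intro a haf hag
      simp only [Finset.mem_image, mem_univ, true_and] at haf hag
      obtain ⟨l, rfl⟩ := haf
      obtain ⟨l', h⟩ := hag
      exact hfg l l' h.symm
  have hcard : ((Fintype.piFinset P) ×ˢ
      (univ : Finset ({i // i ∈ C} → (Fin n → steps)))).card
      ≤ (Nat.centralBinom n ^ 2) ^ k * (4 ^ n) ^ (q - 2 * k) := by
    rw [Finset.card_product, Fintype.card_piFinset]
    apply Nat.mul_le_mul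
    · calc ∏ l, (P l).card ≤ ∏ _l : Fin k, Nat.centralBinom n ^ 2 := by
            apply Finset.prod_le_prod'
            intro l _
            exact pairCount_le n _
        _ = (Nat.centralBinom n ^ 2) ^ k := by
            rw [Finset.prod_const, Finset.card_univ, Fintype.card_fin]
    · rw [Finset.card_univ, Fintype.card_fun, Fintype.card_fun, Fintype.card_coe,
        Fintype.card_coe, Fintype.card_fin, hCcard]
      have h4 : steps.card = 4 := by decide
      rw [h4]
  exact le_trans hmain hcard

lemma matching {q : ℕ} (pos : Fin q → ℤ × ℤ) :
    ∀ (k : ℕ) (T : Finset (Fin q)),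
      3 * k ≤ (T.filter (fun i => ∃ j ∈ T, j ≠ i ∧ pos i = pos j)).card + 2 →
      ∃ f g : Fin k → Fin q,
        Function.Injective f ∧ Function.Injective g ∧ (∀ l l', f l ≠ g l') ∧
        (∀ l, f l ∈ T) ∧ (∀ l, g l ∈ T) ∧ (∀ l, pos (f l) = pos (g l)) := by
  intro k
  induction k with
  | zero =>
    intro T _
    refine ⟨Fin.elim0, Fin.elim0, ?_, ?_, ?_, ?_, ?_, ?_⟩ <;>
      first
        | (intro l; exact l.elim0)
        | (intro l l'; exact l.elim0)
  | succ k ih =>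
    intro T hT
    have hpos1 : 1 ≤ (T.filter (fun i => ∃ j ∈ T, j ≠ i ∧ pos i = pos j)).card := by omega
    obtain ⟨i, hi⟩ := Finset.card_pos.mp
      (show 0 < (T.filter (fun i => ∃ j ∈ T, j ≠ i ∧ pos i = pos j)).card by omega)
    simp only [mem_filter] at hi
    obtain ⟨hiT, j, hjT, hji, hij⟩ := hi
    set T' : Finset (Fin q) := T \ {i, j} with hT'
    set collT' := T'.filter (fun m => ∃ j' ∈ T', j' ≠ m ∧ pos m = pos j') with hcollT'
    set D := (T'.filter (fun m => pos m = pos i)) \ collT' with hD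
    have hiT' : i ∉ T' := by simp [hT']
    have hjT' : j ∉ T' := by simp [hT']
    have hsub : (T.filter (fun m => ∃ j' ∈ T, j' ≠ m ∧ pos m = pos j'))
        ⊆ (collT' ∪ D) ∪ {i, j} := by
      intro m hm
      simp only [mem_filter] at hm
      obtain ⟨hmT, j', hj'T, hj'm, hmj'⟩ := hm
      by_cases hmi : m = i
      · exact Finset.mem_union_right _ (by simp [hmi])
      by_cases hmj : m = j
      · exact Finset.mem_union_right _ (by simp [hmj])
      have hmT' : m ∈ T' := by simp [hT', hmT, hmi, hmj]
      by_cases hmc : m ∈ collT'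
      · exact Finset.mem_union_left _ (Finset.mem_union_left _ hmc)
      · apply Finset.mem_union_left _ (Finset.mem_union_right _ ?_)
        rw [hD, Finset.mem_sdiff]
        refine ⟨?_, hmc⟩
        rw [mem_filter]
        refine ⟨hmT', ?_⟩
        by_cases hj'T' : j' ∈ T'
        · exfalso
          apply hmc
          rw [hcollT', mem_filter]
          exact ⟨hmT', j', hj'T', hj'm, hmj'⟩
        · have : j' = i ∨ j' = j := by
            by_contra hcon
            push_neg at hcon
            exact hj'T' (by simp [hT', hj'T, hcon.1, hcon.2])
          rcases this with rfl | rfl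
          · exact hmj'
          · rw [hmj', hij]
    have hDcard : D.card ≤ 1 := by
      rw [Finset.card_le_one]
      intro a ha b hb
      by_contra hab
      rw [hD, Finset.mem_sdiff, mem_filter] at ha hb
      apply ha.2
      rw [hcollT', mem_filter]
      exact ⟨ha.1.1, b, hb.1.1, fun h => hab h.symm, by rw [ha.1.2, hb.1.2]⟩
    have hcards : (T.filter (fun m => ∃ j' ∈ T, j' ≠ m ∧ pos m = pos j')).card
        ≤ collT'.card + 3 := by
      calc (T.filter (fun m => ∃ j' ∈ T, j' ≠ m ∧ pos m = pos j')).card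
          ≤ ((collT' ∪ D) ∪ {i, j}).card := Finset.card_le_card hsub
        _ ≤ (collT' ∪ D).card + ({i, j} : Finset (Fin q)).card := Finset.card_union_le _ _
        _ ≤ (collT'.card + D.card) + ({i, j} : Finset (Fin q)).card := by
            exact Nat.add_le_add_right (Finset.card_union_le _ _) _
        _ ≤ (collT'.card + 1) + 2 := by
            have : ({i, j} : Finset (Fin q)).card ≤ 2 := Finset.card_insert_le _ _ |>.trans (by simp)
            omega
        _ = collT'.card + 3 := by omega
    have hT'bound : 3 * k ≤ collT'.card + 2 := by omega
    obtain ⟨f, g, hfinj, hginj, hfg, hfT, hgT, hfgpos⟩ := ih T' hT'bound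
    refine ⟨Fin.cons i f, Fin.cons j g, ?_, ?_, ?_, ?_, ?_, ?_⟩
    · intro a b hab
      induction a using Fin.cases with
      | zero =>
        induction b using Fin.cases with
        | zero => rfl
        | succ b =>
          exfalso
          rw [Fin.cons_zero, Fin.cons_succ] at hab
          exact hiT' (hab ▸ hfT b)
      | succ a =>
        induction b using Fin.cases with
        | zero =>
          exfalso
          rw [Fin.cons_zero, Fin.cons_succ] at hab
          exact hiT' (hab ▸ hfT a)
        | succ b =>
          rw [Fin.cons_succ, Fin.cons_succ] at hab
          exact congrArg Fin.succ (hfinj hab)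
    · intro a b hab
      induction a using Fin.cases with
      | zero =>
        induction b using Fin.cases with
        | zero => rfl
        | succ b =>
          exfalso
          rw [Fin.cons_zero, Fin.cons_succ] at hab
          exact hjT' (hab ▸ hgT b)
      | succ a =>
        induction b using Fin.cases with
        | zero =>
          exfalso
          rw [Fin.cons_zero, Fin.cons_succ] at hab
          exact hjT' (hab ▸ hgT a)
        | succ b =>
          rw [Fin.cons_succ, Fin.cons_succ] at hab
          exact congrArg Fin.succ (hginj hab)
    · intro l l'
      induction l using Fin.cases with
      | zero =>
        induction l' using Fin.cases with
        | zero => simpa using fun h => hji h.symm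
        | succ b =>
          rw [Fin.cons_zero, Fin.cons_succ]
          intro h
          exact hiT' (h ▸ hgT b)
      | succ a =>
        induction l' using Fin.cases with
        | zero =>
          rw [Fin.cons_zero, Fin.cons_succ]
          intro h
          exact hjT' (h ▸ hfT a)
        | succ b =>
          rw [Fin.cons_succ, Fin.cons_succ]
          exact hfg a b
    · intro l
      induction l using Fin.cases with
      | zero => rw [Fin.cons_zero]; exact hiT
      | succ a =>
        rw [Fin.cons_succ]
        exact (Finset.mem_sdiff.mp (hfT a)).1
    · intro l
      induction l using Fin.cases with
      | zero => rw [Fin.cons_zero]; exact hjT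
      | succ a =>
        rw [Fin.cons_succ]
        exact (Finset.mem_sdiff.mp (hgT a)).1
    · intro l
      induction l using Fin.cases with
      | zero => rw [Fin.cons_zero, Fin.cons_zero]; exact hij
      | succ a =>
        rw [Fin.cons_succ, Fin.cons_succ]
        exact hfgpos a

lemma walkPath_full {n : ℕ} (x : ℤ × ℤ) (d : Fin n → ℤ × ℤ) :
    walkPath x d n = x + ∑ k, d k := by
  unfold walkPath
  congr 1
  apply Finset.sum_congr _ (fun _ _ => rfl)
  apply Finset.filter_true_of_mem
  intro k _
  exact k.isLt


theorem stmt11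
    (p q : ℕ) (hp : 2 ≤ p) (hq : 2 ≤ q) (n : ℕ) (hn : 1 ≤ n)
    (X : Fin q → ℤ × ℤ) :
    Pwalk q n X (fun S =>
        ¬ ((Finset.univ.filter
            (fun i : Fin q => ∃ j : Fin q, j ≠ i ∧ S i n = S j n)).card ≤ p)) ≤
      (q : ℝ) ^ p * (n : ℝ) ^ (-(p : ℝ) / 3) := by
  classical
  have hrhs : (0 : ℝ) ≤ (q : ℝ) ^ p * (n : ℝ) ^ (-(p : ℝ) / 3) := by positivity
  -- positions
  set pos : (Fin q → Fin n → steps) → Fin q → ℤ × ℤ :=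
    fun δ i => X i + ∑ k, ((δ i k : ℤ × ℤ)) with hpos
  set A' : (Fin q → Fin n → steps) → Prop := fun δ =>
    ¬ ((Finset.univ.filter
        (fun i : Fin q => ∃ j : Fin q, j ≠ i ∧ pos δ i = pos δ j)).card ≤ p) with hA'
  have hPw : Pwalk q n X (fun S =>
        ¬ ((Finset.univ.filter
            (fun i : Fin q => ∃ j : Fin q, j ≠ i ∧ S i n = S j n)).card ≤ p))
      = ((univ.filter A').card : ℝ) / 4 ^ (q * n) := by
    unfold Pwalk Ewalk
    congr 1
    rw [← Finset.sum_boole]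
    apply Finset.sum_congr rfl
    intro δ _
    have hiff : (¬ ((Finset.univ.filter
        (fun i : Fin q => ∃ j : Fin q, j ≠ i ∧
          walkPath (X i) (fun k => ((δ i k : ℤ × ℤ))) n
            = walkPath (X j) (fun k => ((δ j k : ℤ × ℤ))) n)).card ≤ p)) ↔ A' δ := by
      simp only [hA', hpos, walkPath_full]
    by_cases h : A' δ
    · simp only [if_pos (hiff.mpr h), if_pos h]
      exact (if_pos h).symm
    · simp only [if_neg (fun hc => h (hiff.mp hc)), if_neg h]
      exact (if_neg h).symm
  rw [hPw]
  by_cases hpq : q ≤ p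
  · have hempty : univ.filter A' = ∅ := by
      rw [Finset.filter_eq_empty_iff]
      intro δ _
      simp only [hA', not_not]
      calc (Finset.univ.filter
          (fun i : Fin q => ∃ j : Fin q, j ≠ i ∧ pos δ i = pos δ j)).card
          ≤ (univ : Finset (Fin q)).card := Finset.card_filter_le _ _
        _ = q := by rw [Finset.card_univ, Fintype.card_fin]
        _ ≤ p := hpq
    rw [hempty]
    simpa using hrhs
  push_neg at hpq
  set k := (p + 2) / 3 with hk
  have hk1 : 1 ≤ k := by omega
  have h2k : 2 * k ≤ p := by omega
  have h3k : p ≤ 3 * k := by omega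
  have h3k2 : 3 * k ≤ p + 2 := by omega
  have h2kq : 2 * k ≤ q := by omega
  set B : (Fin k → Fin q) × (Fin k → Fin q) → Finset (Fin q → Fin n → steps) :=
    fun fg => univ.filter (fun δ => ∀ l, X (fg.1 l) + ∑ m, ((δ (fg.1 l) m : ℤ × ℤ))
        = X (fg.2 l) + ∑ m, ((δ (fg.2 l) m : ℤ × ℤ))) with hB
  set S : Finset ((Fin k → Fin q) × (Fin k → Fin q)) :=
    univ.filter (fun fg => Function.Injective fg.1 ∧ Function.Injective fg.2 ∧
      ∀ l l', fg.1 l ≠ fg.2 l') with hS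
  have hcover : univ.filter A' ⊆ S.biUnion B := by
    intro δ hδ
    simp only [mem_filter, mem_univ, true_and, hA'] at hδ
    push_neg at hδ
    have hcardeq : (univ.filter (fun i => ∃ j ∈ (univ : Finset (Fin q)),
        j ≠ i ∧ pos δ i = pos δ j)).card
        = (univ.filter (fun i : Fin q => ∃ j, j ≠ i ∧ pos δ i = pos δ j)).card := by
      congr 1
      ext i
      simp
    have hreq : 3 * k ≤ (univ.filter (fun i => ∃ j ∈ (univ : Finset (Fin q)),
        j ≠ i ∧ pos δ i = pos δ j)).card + 2 := by
      rw [hcardeq]; omega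
    obtain ⟨f, g, hf, hg, hfg, _, _, hposeq⟩ := matching (pos δ) k univ hreq
    rw [Finset.mem_biUnion]
    refine ⟨(f, g), ?_, ?_⟩
    · simp only [hS, mem_filter, mem_univ, true_and]
      exact ⟨hf, hg, hfg⟩
    · simp only [hB, mem_filter, mem_univ, true_and]
      intro l
      have := hposeq l
      simpa [hpos] using this
  set bound := (Nat.centralBinom n ^ 2) ^ k * (4 ^ n) ^ (q - 2 * k) with hbound
  have hNbad : (univ.filter A').card ≤ q ^ (2 * k) * bound := by
    calc (univ.filter A').card ≤ (S.biUnion B).card := Finset.card_le_card hcover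
      _ ≤ ∑ fg ∈ S, (B fg).card := Finset.card_biUnion_le
      _ ≤ ∑ _fg ∈ S, bound := by
          apply Finset.sum_le_sum
          intro fg hfg
          simp only [hS, mem_filter, mem_univ, true_and] at hfg
          exact B_count n q k X fg.1 fg.2 hfg.1 hfg.2.1 hfg.2.2
      _ = S.card * bound := by rw [Finset.sum_const, smul_eq_mul]
      _ ≤ q ^ (2 * k) * bound := by
          apply Nat.mul_le_mul_right
          calc S.card ≤ (univ : Finset ((Fin k → Fin q) × (Fin k → Fin q))).card :=
                Finset.card_filter_le _ _
            _ = q ^ (2 * k) := by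
                rw [Finset.card_univ, Fintype.card_prod, Fintype.card_fun]
                simp only [Fintype.card_fin]
                rw [← pow_add]
                congr 1
                omega
  have hkey : q ^ (2 * k) * bound * (3 * n + 1) ^ k ≤ q ^ (2 * k) * 4 ^ (q * n) := by
    rw [mul_assoc]
    apply Nat.mul_le_mul_left
    calc bound * (3 * n + 1) ^ k
        = ((3 * n + 1) * Nat.centralBinom n ^ 2) ^ k * (4 ^ n) ^ (q - 2 * k) := by
          rw [hbound, mul_pow]; ring
      _ ≤ (16 ^ n) ^ k * (4 ^ n) ^ (q - 2 * k) :=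
          Nat.mul_le_mul_right _ (Nat.pow_le_pow_left (cb_bound n) k)
      _ = 4 ^ (2 * n * k) * 4 ^ (n * (q - 2 * k)) := by
          rw [show (16 : ℕ) = 4 ^ 2 by norm_num, ← pow_mul, ← pow_mul, ← pow_mul]
          ring_nf
      _ = 4 ^ (q * n) := by
          rw [← pow_add]
          congr 1
          have h1 : n * (q - 2 * k) = n * q - n * (2 * k) := Nat.mul_sub ..
          have h2 : n * (2 * k) ≤ n * q := Nat.mul_le_mul_left n h2kq
          have h3 : 2 * n * k = n * (2 * k) := by ring
          have h4 : q * n = n * q := by ring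
          rw [h1]
          omega
  have hfrac : ((univ.filter A').card : ℝ) / 4 ^ (q * n)
      ≤ (q : ℝ) ^ (2 * k) / ((3 * n + 1 : ℕ) : ℝ) ^ k := by
    rw [div_le_div_iff₀ (by positivity) (by positivity)]
    have := hkey
    have hcast : ((univ.filter A').card : ℝ) * ((3 * n + 1 : ℕ) : ℝ) ^ k
        ≤ ((q ^ (2 * k) * bound * (3 * n + 1) ^ k : ℕ) : ℝ) := by
      push_cast
      have h1 : ((univ.filter A').card : ℝ) ≤ ((q ^ (2 * k) * bound : ℕ) : ℝ) := by
        exact_mod_cast hNbad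
      push_cast at h1
      have h2 : (0 : ℝ) ≤ ((3 * (n : ℝ) + 1)) ^ k := by positivity
      nlinarith [h1, h2]
    calc ((univ.filter A').card : ℝ) * ((3 * n + 1 : ℕ) : ℝ) ^ k
        ≤ ((q ^ (2 * k) * bound * (3 * n + 1) ^ k : ℕ) : ℝ) := hcast
      _ ≤ ((q ^ (2 * k) * 4 ^ (q * n) : ℕ) : ℝ) := by exact_mod_cast hkey
      _ = (q : ℝ) ^ (2 * k) * 4 ^ (q * n) := by push_cast; ring
  refine le_trans hfrac ?_
  have hn1 : (1 : ℝ) ≤ (n : ℝ) := by exact_mod_cast hn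
  have e1 : (q : ℝ) ^ (2 * k) ≤ (q : ℝ) ^ p := by
    apply pow_le_pow_right₀ (by exact_mod_cast Nat.one_le_of_lt hq) h2k
  have e2 : (n : ℝ) ^ k ≤ ((3 * n + 1 : ℕ) : ℝ) ^ k := by
    apply pow_le_pow_left₀ (by positivity)
    push_cast
    linarith
  have e3 : ((3 * n + 1 : ℕ) : ℝ) ^ k ≠ 0 := by positivity
  have e4 : (1 : ℝ) / ((3 * n + 1 : ℕ) : ℝ) ^ k ≤ (n : ℝ) ^ (-(k : ℝ)) := by
    rw [Real.rpow_neg (by positivity), Real.rpow_natCast]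
    rw [one_div]
    apply inv_anti₀ (pow_pos (by linarith) k) e2
  have e5 : (n : ℝ) ^ (-(k : ℝ)) ≤ (n : ℝ) ^ (-(p : ℝ) / 3) := by
    apply Real.rpow_le_rpow_of_exponent_le hn1
    have : (p : ℝ) ≤ 3 * (k : ℝ) := by exact_mod_cast h3k
    linarith
  calc (q : ℝ) ^ (2 * k) / ((3 * n + 1 : ℕ) : ℝ) ^ k
      = (q : ℝ) ^ (2 * k) * (1 / ((3 * n + 1 : ℕ) : ℝ) ^ k) := by ring
    _ ≤ (q : ℝ) ^ p * (n : ℝ) ^ (-(p : ℝ) / 3) := by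
        apply mul_le_mul e1 (le_trans e4 e5) (by positivity) (by positivity)


end DP
end
end

section
/- Let m ∈ ℕ and γ_0, γ_1, …, γ_{m−1} ∈ {0,1}. Define integers c_i^k for 0 ≤ k ≤ m and i ∈ ℤ by: c_0^0 := 1, c_i^k := 0 whenever i < 0 or i > k, and the recursion c_i^{k+1} := c_i^k + 2·γ_k·Σ_{j=0}^{i−1} c_j^k for 0 ≤ i ≤ k+1. Then for every δ > 0 and every 0 ≤ i ≤ m: c_i^m ≤ (1+δ)^i · (1 + 2/δ)^{Σ_{r=0}^{m−1} γ_r}. -/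
open MeasureTheory ProbabilityTheory Filter Finset

noncomputable section

namespace DP

theorem stmt14
    (m : ℕ) (γ : ℕ → ℕ) (hγ : ∀ r, γ r = 0 ∨ γ r = 1)
    (c : ℕ → ℕ → ℝ)
    (hc00 : c 0 0 = 1)
    (hczero : ∀ k i : ℕ, k ≤ m → k < i → c k i = 0)
    (hrec : ∀ k : ℕ, k + 1 ≤ m → ∀ i : ℕ, i ≤ k + 1 →
      c (k + 1) i = c k i + 2 * (γ k : ℝ) * ∑ j ∈ Finset.range i, c k j)
    (δ : ℝ) (hδ : 0 < δ) :
    ∀ i : ℕ, i ≤ m →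
      c m i ≤ (1 + δ) ^ i * (1 + 2 / δ) ^ (∑ r ∈ Finset.range m, γ r) := by
  have key : ∀ k, k ≤ m → ∀ i, i ≤ k →
      c k i ≤ (1 + δ) ^ i * (1 + 2 / δ) ^ (∑ r ∈ Finset.range k, γ r) := by
    intro k
    induction k with
    | zero =>
      intro _ i hi
      interval_cases i
      simp [hc00]
    | succ k ih =>
      intro hk i hi
      have hk' : k ≤ m := Nat.le_of_succ_le hk
      have ih' := ih hk'
      have hpos1 : (0:ℝ) < 1 + δ := by linarith
      have hpos2 : (0:ℝ) < 1 + 2/δ := by positivity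
      set A : ℝ := (1 + 2 / δ) ^ (∑ r ∈ Finset.range k, γ r) with hA
      have hApos : 0 < A := by positivity
      have hcki : c k i ≤ (1+δ)^i * A := by
        rcases Nat.lt_or_ge k i with h | h
        · rw [hczero k i hk' h]; positivity
        · exact ih' i h
      have hsum : ∑ j ∈ Finset.range i, c k j ≤ ((1+δ)^i - 1)/δ * A := by
        calc ∑ j ∈ Finset.range i, c k j
            ≤ ∑ j ∈ Finset.range i, (1+δ)^j * A := by
              apply Finset.sum_le_sum
              intro j hj
              exact ih' j (Nat.lt_succ_iff.mp (lt_of_lt_of_le (Finset.mem_range.mp hj) hi))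
          _ = (∑ j ∈ Finset.range i, (1+δ)^j) * A := by rw [Finset.sum_mul]
          _ = ((1+δ)^i - 1)/δ * A := by
              rw [geom_sum_eq (by linarith : (1:ℝ)+δ ≠ 1)]
              ring_nf
      have hXge : (1:ℝ) ≤ (1+δ)^i := one_le_pow₀ (by linarith)
      rw [hrec k hk i hi, Finset.sum_range_succ, pow_add]
      rcases hγ k with h0 | h1
      · rw [h0]
        push_cast [h0]
        simpa using hcki
      · rw [h1]
        push_cast [h1]
        rw [pow_one]
        have h2 : 2 * (1:ℝ) * (∑ j ∈ Finset.range i, c k j) ≤ 2 * (((1+δ)^i - 1)/δ * A) := by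
          rw [mul_one]; linarith
        have h3 : 2 * (((1+δ)^i - 1)/δ * A) ≤ (1+δ)^i * A * (2/δ) := by
          have hd : ((1+δ)^i - 1)/δ ≤ (1+δ)^i/δ := by gcongr; linarith
          calc 2 * (((1+δ)^i - 1)/δ * A) ≤ 2 * ((1+δ)^i/δ * A) := by nlinarith
            _ = (1+δ)^i * A * (2/δ) := by ring
        calc c k i + 2 * (1:ℝ) * (∑ j ∈ Finset.range i, c k j)
            ≤ (1+δ)^i * A + (1+δ)^i * A * (2/δ) := by linarith
          _ = (1+δ)^i * (A * (1 + 2/δ)) := by ring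
  intro i hi
  exact key m le_rfl i hi

end DP
end
end

section
/- Let m ∈ ℕ and γ_0, γ_1, …, γ_m ∈ {0,1}. Define numbers a_l^k for 0 ≤ k ≤ m+1 and l ∈ ℤ by: a_0^0 := 1, a_l^k := 0 whenever l < 0 or l > k, and the recursion a_l^{k+1} := 2·γ_k·a_{l−1}^k + Σ_{j=l}^{k} a_j^k. Set n_k := Σ_{i=0}^{k−1} γ_i. Then: (i) a_l^k = 0 for every l > n_k; (ii) for every δ ∈ (0,1/2) and every 0 ≤ l ≤ n_k: a_l^k ≤ 2^{n_k} · (1+2δ)^k · δ^{−(n_k − l)}. -/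
open MeasureTheory ProbabilityTheory Filter Finset

noncomputable section

namespace DP

lemma geom_int_aux (δ : ℝ) (hδ0 : 0 < δ) (hδ1 : δ < 1) (l K : ℤ) :
    ∑ j ∈ Finset.Icc l K, δ ^ (j - l) ≤ (1 - δ)⁻¹ := by
  have h1 : ∀ j ∈ Finset.Icc l K, δ ^ (j - l) = δ ^ (j - l).toNat := by
    intro j hj
    rw [Finset.mem_Icc] at hj
    rw [← zpow_natCast, Int.toNat_of_nonneg (by omega)]
  rw [Finset.sum_congr rfl h1]
  have hinj : ∀ x ∈ Finset.Icc l K, ∀ y ∈ Finset.Icc l K,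
      (x - l).toNat = (y - l).toNat → x = y := by
    intro x hx y hy hxy
    rw [Finset.mem_Icc] at hx hy
    omega
  rw [show (∑ x ∈ Finset.Icc l K, δ ^ (x - l).toNat) = ∑ i ∈ Finset.image (fun j : ℤ => (j - l).toNat) (Finset.Icc l K), δ ^ i from (Finset.sum_image hinj).symm]
  have hsub : Finset.image (fun j : ℤ => (j - l).toNat) (Finset.Icc l K) ⊆
      Finset.range ((K - l).toNat + 1) := by
    intro i hi
    simp only [Finset.mem_image, Finset.mem_Icc] at hi
    obtain ⟨j, hj, rfl⟩ := hi
    simp only [Finset.mem_range]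
    omega
  calc ∑ i ∈ Finset.image (fun j : ℤ => (j - l).toNat) (Finset.Icc l K), δ ^ i
      ≤ ∑ i ∈ Finset.range ((K - l).toNat + 1), δ ^ i :=
        Finset.sum_le_sum_of_subset_of_nonneg hsub (fun i _ _ => by positivity)
    _ ≤ (1 - δ)⁻¹ := by
        rw [geom_sum_eq (by linarith)]
        have := pow_pos hδ0 ((K - l).toNat + 1)
        have h2 : (δ ^ ((K - l).toNat + 1) - 1) / (δ - 1)
            = (1 - δ ^ ((K - l).toNat + 1)) / (1 - δ) := by
          rw [← neg_sub (δ ^ ((K - l).toNat + 1)) 1, ← neg_sub δ 1, neg_div_neg_eq]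
        rw [h2, inv_eq_one_div]
        exact div_le_div₀ (by norm_num) (by linarith) (by linarith) le_rfl


theorem stmt15
    (m : ℕ) (γ : ℕ → ℕ) (hγ : ∀ r, γ r = 0 ∨ γ r = 1)
    (a : ℕ → ℤ → ℝ)
    (ha00 : a 0 0 = 1)
    (hazero : ∀ (k : ℕ) (l : ℤ), k ≤ m + 1 → (l < 0 ∨ (k : ℤ) < l) → a k l = 0)
    (harec : ∀ k : ℕ, k + 1 ≤ m + 1 → ∀ l : ℤ, 0 ≤ l → l ≤ (k : ℤ) + 1 →
      a (k + 1) l = 2 * (γ k : ℝ) * a k (l - 1) + ∑ j ∈ Finset.Icc l (k : ℤ), a k j) :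
    (∀ k : ℕ, k ≤ m + 1 → ∀ l : ℤ, ((∑ i ∈ Finset.range k, γ i : ℕ) : ℤ) < l →
      a k l = 0) ∧
    (∀ δ : ℝ, 0 < δ → δ < 1 / 2 → ∀ k : ℕ, k ≤ m + 1 → ∀ l : ℤ, 0 ≤ l →
      l ≤ ((∑ i ∈ Finset.range k, γ i : ℕ) : ℤ) →
      a k l ≤ 2 ^ (∑ i ∈ Finset.range k, γ i) * (1 + 2 * δ) ^ k *
        δ ^ (-(((∑ i ∈ Finset.range k, γ i : ℕ) : ℤ) - l))) := by
  have hγle : ∀ r, γ r ≤ 1 := fun r => by rcases hγ r with h | h <;> omega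
  have hnkle : ∀ k : ℕ, (∑ i ∈ Finset.range k, γ i) ≤ k := by
    intro k
    calc (∑ i ∈ Finset.range k, γ i) ≤ ∑ i ∈ Finset.range k, 1 :=
          Finset.sum_le_sum (fun i _ => hγle i)
      _ = k := by simp
  have part1 : ∀ k : ℕ, k ≤ m + 1 → ∀ l : ℤ,
      ((∑ i ∈ Finset.range k, γ i : ℕ) : ℤ) < l → a k l = 0 := by
    intro k
    induction k with
    | zero =>
      intro hk l hl
      exact hazero 0 l hk (Or.inr (by simpa using hl))
    | succ k ih =>
      intro hk l hl
      rw [Finset.sum_range_succ] at hl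
      by_cases hl0 : l < 0
      · exact hazero _ _ hk (Or.inl hl0)
      push_neg at hl0
      by_cases hlk : ((k : ℤ) + 1) < l
      · exact hazero _ _ hk (Or.inr (by exact_mod_cast hlk))
      push_neg at hlk
      rw [harec k hk l hl0 hlk]
      have hsum : ∑ j ∈ Finset.Icc l (k : ℤ), a k j = 0 := by
        apply Finset.sum_eq_zero
        intro j hj
        rw [Finset.mem_Icc] at hj
        apply ih (by omega)
        push_cast at hl ⊢
        omega
      rw [hsum, add_zero]
      rcases hγ k with h | h
      · simp [h]
      · have hz : a k (l - 1) = 0 := by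
          apply ih (by omega)
          rw [h] at hl
          push_cast at hl ⊢
          omega
        rw [hz, mul_zero]
  refine ⟨part1, ?_⟩
  intro δ hδ0 hδhalf
  have h1δ : 0 < 1 - δ := by linarith
  have hδne : δ ≠ 0 := ne_of_gt hδ0
  have hmul : (1 - δ)⁻¹ * (1 - δ) = 1 := inv_mul_cancel₀ (ne_of_gt h1δ)
  have hinvpos : (0 : ℝ) < (1 - δ)⁻¹ := inv_pos.mpr h1δ
  have hinv : (1 - δ)⁻¹ ≤ 1 + 2 * δ := by nlinarith [hmul, hinvpos]
  have hinv4 : (1 - δ)⁻¹ ≤ 4 := by nlinarith [hmul, hinvpos]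
  -- main claim, with exponent rewritten and no lower bound on l
  have key : ∀ k : ℕ, k ≤ m + 1 → ∀ l : ℤ,
      l ≤ ((∑ i ∈ Finset.range k, γ i : ℕ) : ℤ) →
      a k l ≤ 2 ^ (∑ i ∈ Finset.range k, γ i) * (1 + 2 * δ) ^ k *
        δ ^ (l - ((∑ i ∈ Finset.range k, γ i : ℕ) : ℤ)) := by
    intro k
    induction k with
    | zero =>
      intro hk l hl
      simp only [Finset.range_zero, Finset.sum_empty, Nat.cast_zero, pow_zero, one_mul] at hl ⊢
      rcases lt_or_eq_of_le hl with h | h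
      · rw [hazero 0 l hk (Or.inl (by omega))]
        positivity
      · rw [h, ha00]
        norm_num
    | succ k ih =>
      intro hk l hl
      by_cases hl0 : l < 0
      · rw [hazero _ _ hk (Or.inl hl0)]
        positivity
      push_neg at hl0
      have hklm : k ≤ m + 1 := by omega
      have hNk1 : (∑ i ∈ Finset.range (k + 1), γ i) = (∑ i ∈ Finset.range k, γ i) + γ k :=
        Finset.sum_range_succ γ k
      have hlk1 : l ≤ (k : ℤ) + 1 := by
        have h2 := hnkle (k + 1)
        rw [hNk1] at hl h2
        omega
      rw [harec k hk l hl0 hlk1]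
      set Nk : ℕ := ∑ i ∈ Finset.range k, γ i with hNkdef
      set B : ℝ := 2 ^ Nk * (1 + 2 * δ) ^ k with hBdef
      have hBpos : 0 < B := by positivity
      -- bound on the sum
      have hS : ∑ j ∈ Finset.Icc l (k : ℤ), a k j ≤ B * δ ^ (l - (Nk : ℤ)) * (1 - δ)⁻¹ := by
        have hterm : ∀ j ∈ Finset.Icc l (k : ℤ), a k j ≤ B * δ ^ (j - (Nk : ℤ)) := by
          intro j hj
          rw [Finset.mem_Icc] at hj
          by_cases hjn : j ≤ (Nk : ℤ)
          · exact ih hklm j hjn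
          · rw [part1 k hklm j (by omega)]
            positivity
        calc ∑ j ∈ Finset.Icc l (k : ℤ), a k j
            ≤ ∑ j ∈ Finset.Icc l (k : ℤ), B * δ ^ (j - (Nk : ℤ)) := Finset.sum_le_sum hterm
          _ = B * δ ^ (l - (Nk : ℤ)) * ∑ j ∈ Finset.Icc l (k : ℤ), δ ^ (j - l) := by
              rw [Finset.mul_sum]
              apply Finset.sum_congr rfl
              intro j hj
              have hje : j - (Nk : ℤ) = (l - (Nk : ℤ)) + (j - l) := by ring
              rw [hje, zpow_add₀ hδne, hBdef]
              ring
          _ ≤ B * δ ^ (l - (Nk : ℤ)) * (1 - δ)⁻¹ := by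
              apply mul_le_mul_of_nonneg_left
                (geom_int_aux δ hδ0 (by linarith) l k) (by positivity)
      rcases hγ k with h0 | h1
      · -- γ k = 0
        rw [hNk1, h0]
        simp only [Nat.add_zero, Nat.cast_zero, mul_zero, zero_mul, zero_add]
        calc ∑ j ∈ Finset.Icc l (k : ℤ), a k j
            ≤ B * δ ^ (l - (Nk : ℤ)) * (1 - δ)⁻¹ := hS
          _ ≤ B * δ ^ (l - (Nk : ℤ)) * (1 + 2 * δ) := by
              apply mul_le_mul_of_nonneg_left hinv (by positivity)
          _ = 2 ^ Nk * (1 + 2 * δ) ^ (k + 1) * δ ^ (l - (Nk : ℤ)) := by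
              rw [hBdef]; ring
      · -- γ k = 1
        have hl1 : l - 1 ≤ (Nk : ℤ) := by
          rw [hNk1, h1] at hl
          push_cast at hl
          omega
        have hfirst : a k (l - 1) ≤ B * δ ^ (l - 1 - (Nk : ℤ)) := ih hklm (l - 1) hl1
        have hEpos : (0 : ℝ) < δ ^ (l - 1 - (Nk : ℤ)) := zpow_pos hδ0 _
        have hsplit : δ ^ (l - (Nk : ℤ)) = δ ^ (l - 1 - (Nk : ℤ)) * δ := by
          rw [← zpow_add_one₀ hδne]
          ring_nf
        have hexp : l - (((∑ i ∈ Finset.range (k + 1), γ i : ℕ)) : ℤ) = l - 1 - (Nk : ℤ) := by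
          rw [hNk1, h1]
          push_cast
          omega
        rw [hexp, hNk1, h1]
        push_cast
        calc 2 * (1 : ℝ) * a k (l - 1) + ∑ j ∈ Finset.Icc l (k : ℤ), a k j
            ≤ 2 * (1 : ℝ) * (B * δ ^ (l - 1 - (Nk : ℤ)))
              + B * δ ^ (l - (Nk : ℤ)) * (1 - δ)⁻¹ := by
              apply add_le_add _ hS
              apply mul_le_mul_of_nonneg_left hfirst (by norm_num)
          _ = B * δ ^ (l - 1 - (Nk : ℤ)) * (2 + δ * (1 - δ)⁻¹) := by
              rw [hsplit]; ring
          _ ≤ B * δ ^ (l - 1 - (Nk : ℤ)) * (2 * (1 + 2 * δ)) := by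
              apply mul_le_mul_of_nonneg_left _ (by positivity)
              nlinarith [hinv4]
          _ = 2 ^ (Nk + 1) * (1 + 2 * δ) ^ (k + 1) * δ ^ (l - 1 - (Nk : ℤ)) := by
              rw [hBdef]; ring
  intro k hk l _ hl
  have := key k hk l hl
  rwa [neg_sub]

end DP
end
end

section
/- Assume the sub-critical regime (SC) or the quasi-critical regime (QC). There exists ε = ε(μ) ∈ (0,1) such that for all N and all integers q ≥ 2 with q² ≤ ε·log N: Σ over subsets K ⊆ C_q with |K| ≥ 2 of σ_N^{2|K| − 1{A_K}} ≤ 8·q³·σ_N³, where C_q := {(i,j) : 1 ≤ i < j ≤ q}, and A_K is the property that there exist two distinct pairs (i,j), (k,l) ∈ K with {i,j} ∩ {k,l} ≠ ∅. -/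
open MeasureTheory ProbabilityTheory Filter Finset

noncomputable section

namespace DP


set_option linter.dupNamespace false
set_option maxHeartbeats 1000000

-- A: exp u ≤ 1 + u + u² exp |u|
lemma expA (u : ℝ) : Real.exp u ≤ 1 + u + u^2 * Real.exp |u| := by
  rcases le_or_gt (|u|) 1 with h | h
  · have hb := Real.exp_bound h (n := 2) (by norm_num)
    have : Real.exp u - (1 + u) ≤ |u|^2 * (3 / (2*2)) := by
      have := abs_le.mp hb
      simp [Finset.sum_range_succ] at this ⊢
      nlinarith [this.2]
    have h1 : (1:ℝ) ≤ Real.exp |u| := Real.one_le_exp (abs_nonneg u)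
    nlinarith [sq_abs u, sq_nonneg u]
  · rcases le_or_gt 0 u with hu | hu
    · have hau : |u| = u := abs_of_nonneg hu
      have h1 : (1:ℝ) ≤ u := by rw [hau] at h; linarith
      have h2 : (1:ℝ) ≤ Real.exp u := Real.one_le_exp (by linarith)
      rw [hau]
      nlinarith [mul_nonneg (by nlinarith : (0:ℝ) ≤ u^2 - 1) (Real.exp_pos u).le]
    · have hau : |u| = -u := abs_of_neg hu
      have h1 : u ≤ -1 := by rw [hau] at h; linarith
      have h2 : Real.exp u ≤ 1 := Real.exp_le_one_iff.mpr (by linarith)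
      have h3 : 1 - u ≤ Real.exp (-u) := by linarith [Real.add_one_le_exp (-u)]
      rw [hau]
      nlinarith [Real.exp_pos (-u), sq_nonneg u]

-- B: x² ≤ exp x + exp (-x)
lemma expB (x : ℝ) : x^2 ≤ Real.exp x + Real.exp (-x) := by
  have key : ∀ y : ℝ, 0 ≤ y → y^2 ≤ Real.exp y := by
    intro y hy
    have h := Real.add_one_le_exp (y/4)
    have h4 : (1 + y/4)^4 ≤ Real.exp (y/4) ^ 4 :=
      pow_le_pow_left₀ (by linarith) (by linarith) 4
    have he : Real.exp (y/4) ^ 4 = Real.exp y := by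
      rw [← Real.exp_nat_mul]; push_cast; ring_nf
    nlinarith [sq_nonneg (y/4 - 1), sq_nonneg (y/4 + 1), sq_nonneg y]
  rcases le_or_gt 0 x with hx | hx
  · nlinarith [key x hx, Real.exp_pos (-x)]
  · have := key (-x) (by linarith)
    nlinarith [Real.exp_pos x]

-- exp v ≤ 1 + 2v for 0 ≤ v ≤ 1/2
lemma expC {v : ℝ} (h0 : 0 ≤ v) (h1 : v ≤ 1/2) : Real.exp v ≤ 1 + 2*v := by
  have h2 := Real.add_one_le_exp (-v)
  have h3 : Real.exp (-v) = (Real.exp v)⁻¹ := Real.exp_neg v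
  have h4 : (1 - v) * Real.exp v ≤ 1 := by
    rw [h3] at h2
    have := Real.exp_pos v
    calc (1-v) * Real.exp v ≤ (Real.exp v)⁻¹ * Real.exp v := by nlinarith
    _ = 1 := inv_mul_cancel₀ (ne_of_gt this)
  nlinarith [Real.exp_pos v]

-- |x| ≤ exp x + exp (-x)
lemma expD (x : ℝ) : |x| ≤ Real.exp x + Real.exp (-x) := by
  rcases abs_cases x with ⟨h, _⟩ | ⟨h, _⟩ <;> rw [h] <;>
    nlinarith [Real.add_one_le_exp x, Real.add_one_le_exp (-x), Real.exp_pos x, Real.exp_pos (-x)]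
section CGF
open Real MeasureTheory

variable {μ : Measure ℝ}

lemma integrable_exp_lin (hμ : EnvLaw μ) (β : ℝ) : Integrable (fun x => Real.exp (β * x)) μ :=
  hμ.exp_moments β

lemma integrable_id' (hμ : EnvLaw μ) : Integrable (fun x : ℝ => x) μ := by
  have hb : Integrable (fun x : ℝ => Real.exp (1*x) + Real.exp ((-1)*x)) μ :=
    (hμ.exp_moments 1).add (hμ.exp_moments (-1))
  refine hb.mono' (measurable_id.aestronglyMeasurable) ?_
  filter_upwards with x
  simp only [one_mul, neg_one_mul, Real.norm_eq_abs]
  exact expD x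

/-- `∫ exp(βx) ≥ 1` -/
lemma I_ge_one (hμ : EnvLaw μ) (β : ℝ) : 1 ≤ ∫ x, Real.exp (β * x) ∂μ := by
  haveI := hμ.prob
  have h1 : Integrable (fun x : ℝ => 1 + β * x) μ :=
    (integrable_const 1).add ((integrable_id' hμ).const_mul β)
  have h2 : ∫ x, (1 + β * x) ∂μ ≤ ∫ x, Real.exp (β * x) ∂μ := by
    refine integral_mono h1 (hμ.exp_moments β) fun x => ?_
    have := Real.add_one_le_exp (β * x); linarith
  have h3 : ∫ x, (1 + β * x) ∂μ = 1 := by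
    rw [integral_add (integrable_const 1) ((integrable_id' hμ).const_mul β)]
    rw [integral_const, integral_const_mul]
    simp [hμ.mean_zero]
  linarith

lemma cgf_nonneg (hμ : EnvLaw μ) (β : ℝ) : 0 ≤ cgf μ β :=
  Real.log_nonneg (I_ge_one hμ β)

/-- the constant `M` -/
def Mconst (μ : Measure ℝ) : ℝ := ∫ x, (Real.exp (2*x) + 2 + Real.exp ((-2)*x)) ∂μ

lemma Mconst_nonneg : 0 ≤ Mconst μ := by
  refine integral_nonneg fun x => ?_
  have := Real.exp_pos (2*x); have := Real.exp_pos ((-2)*x); dsimp; linarith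

lemma integrable_G (hμ : EnvLaw μ) : Integrable (fun x => Real.exp (2*x) + 2 + Real.exp ((-2)*x)) μ := by
  haveI := hμ.prob
  exact ((hμ.exp_moments 2).add (integrable_const 2)).add (hμ.exp_moments (-2))

lemma cgf_le (hμ : EnvLaw μ) {γ : ℝ} (hγ : |γ| ≤ 1) : cgf μ γ ≤ γ^2 * Mconst μ := by
  haveI := hμ.prob
  have hpt : ∀ x : ℝ, Real.exp (γ * x) ≤ 1 + γ * x + γ^2 * (Real.exp (2*x) + 2 + Real.exp ((-2)*x)) := by
    intro x
    have hA := expA (γ * x)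
    have hB := expB x
    have hE : Real.exp |γ * x| ≤ Real.exp x + Real.exp (-x) := by
      calc Real.exp |γ * x| ≤ Real.exp |x| := by
            apply Real.exp_le_exp.mpr
            rw [abs_mul]
            calc |γ| * |x| ≤ 1 * |x| := by
                  exact mul_le_mul_of_nonneg_right hγ (abs_nonneg x)
            _ = |x| := one_mul _
      _ ≤ Real.exp x + Real.exp (-x) := by
            rcases abs_cases x with ⟨h, _⟩ | ⟨h, _⟩ <;> rw [h] <;>
              nlinarith [Real.exp_pos x, Real.exp_pos (-x)]
    have hsq : (γ * x)^2 * Real.exp |γ * x| ≤ γ^2 * (Real.exp (2*x) + 2 + Real.exp ((-2)*x)) := by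
      have e1 : (γ * x)^2 * Real.exp |γ * x| ≤ γ^2 * (x^2 * (Real.exp x + Real.exp (-x))) := by
        rw [mul_pow]
        have : x^2 * Real.exp |γ*x| ≤ x^2 * (Real.exp x + Real.exp (-x)) :=
          mul_le_mul_of_nonneg_left hE (sq_nonneg x)
        nlinarith [sq_nonneg γ, sq_nonneg x, Real.exp_pos (|γ*x|)]
      have e2 : x^2 * (Real.exp x + Real.exp (-x)) ≤ Real.exp (2*x) + 2 + Real.exp ((-2)*x) := by
        have h2 : (Real.exp x + Real.exp (-x))^2 = Real.exp (2*x) + 2 + Real.exp ((-2)*x) := by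
          have ha : Real.exp x * Real.exp x = Real.exp (2*x) := by
            rw [← Real.exp_add]; ring_nf
          have hb : Real.exp (-x) * Real.exp (-x) = Real.exp ((-2)*x) := by
            rw [← Real.exp_add]; ring_nf
          have hc : Real.exp x * Real.exp (-x) = 1 := by
            rw [← Real.exp_add]; simp
          ring_nf at ha hb hc ⊢
          nlinarith [ha, hb, hc]
        nlinarith [mul_le_mul_of_nonneg_right hB (by positivity : (0:ℝ) ≤ Real.exp x + Real.exp (-x)), Real.exp_pos x, Real.exp_pos (-x)]
      calc (γ * x)^2 * Real.exp |γ * x| ≤ γ^2 * (x^2 * (Real.exp x + Real.exp (-x))) := e1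
        _ ≤ γ^2 * (Real.exp (2*x) + 2 + Real.exp ((-2)*x)) :=
            mul_le_mul_of_nonneg_left e2 (sq_nonneg γ)
    linarith
  have hRint : Integrable (fun x => 1 + γ * x + γ^2 * (Real.exp (2*x) + 2 + Real.exp ((-2)*x))) μ :=
    ((integrable_const 1).add ((integrable_id' hμ).const_mul γ)).add ((integrable_G hμ).const_mul (γ^2))
  have hI : ∫ x, Real.exp (γ * x) ∂μ ≤ 1 + γ^2 * Mconst μ := by
    have hmono := integral_mono (hμ.exp_moments γ) hRint hpt
    have if1 : Integrable (fun x : ℝ => 1 + γ * x) μ :=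
      (integrable_const 1).add ((integrable_id' hμ).const_mul γ)
    have if2 : Integrable (fun x : ℝ => γ^2 * (Real.exp (2*x) + 2 + Real.exp ((-2)*x))) μ :=
      (integrable_G hμ).const_mul (γ^2)
    have e1 : ∫ x, (1 + γ * x + γ^2 * (Real.exp (2*x) + 2 + Real.exp ((-2)*x))) ∂μ
        = (∫ x, (1 + γ * x) ∂μ) + γ^2 * Mconst μ := by
      simp only [integral_add if1 if2, integral_const_mul]
      rfl
    have e2 : ∫ x, (1 + γ * x) ∂μ = 1 := by
      simp only [integral_add (integrable_const (1:ℝ)) ((integrable_id' hμ).const_mul γ),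
        integral_const, integral_const_mul]
      simp [measure_univ]
      rw [MeasureTheory.integral_const_mul γ (fun x : ℝ => x), hμ.mean_zero, mul_zero]
    rw [e1, e2] at hmono
    exact hmono
  have hpos : (0:ℝ) < 1 + γ^2 * Mconst μ := by nlinarith [sq_nonneg γ, Mconst_nonneg (μ := μ)]
  calc cgf μ γ ≤ Real.log (1 + γ^2 * Mconst μ) := by
        unfold cgf
        exact Real.log_le_log (by linarith [I_ge_one hμ γ]) hI
  _ ≤ γ^2 * Mconst μ := by
        have := Real.log_le_sub_one_of_pos hpos; linarith

lemma sigma2_le (hμ : EnvLaw μ) {β : ℝ} (h1 : |2*β| ≤ 1) (h2 : 4 * Mconst μ * β^2 ≤ 1/2) :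
    sigma2 μ β ≤ 8 * Mconst μ * β^2 := by
  have hc2 : cgfp μ 2 β ≤ 4 * Mconst μ * β^2 := by
    unfold cgfp
    rw [if_pos (le_refl 2)]
    have h3 : cgf μ (2 * β) ≤ (2*β)^2 * Mconst μ := cgf_le hμ h1
    have h4 := cgf_nonneg hμ β
    push_cast
    nlinarith
  have h5 : Real.exp (cgfp μ 2 β) ≤ Real.exp (4 * Mconst μ * β^2) := Real.exp_le_exp.mpr hc2
  have h6 : Real.exp (4 * Mconst μ * β^2) ≤ 1 + 2 * (4 * Mconst μ * β^2) :=
    expC (by nlinarith [Mconst_nonneg (μ := μ), sq_nonneg β]) h2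
  unfold sigma2
  nlinarith

end CGF
section SRW
open Classical Finset

/-- the diagonal-coordinates bijection -/
def dEquiv : steps ≃ Bool × Bool where
  toFun s := (decide ((s : ℤ × ℤ).1 + (s : ℤ × ℤ).2 = 1), decide ((s : ℤ × ℤ).1 - (s : ℤ × ℤ).2 = 1))
  invFun b := ⟨if b.1 then (if b.2 then (1, 0) else (0, 1)) else (if b.2 then (0, -1) else (-1, 0)), by
    rcases b with ⟨b1, b2⟩ <;> cases b1 <;> cases b2 <;> decide⟩
  left_inv := by decide
  right_inv := by decide

lemma dEquiv_val : ∀ s : steps,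
    ((s : ℤ × ℤ).1 + (s : ℤ × ℤ).2 = if (dEquiv s).1 then 1 else -1) ∧
    ((s : ℤ × ℤ).1 - (s : ℤ × ℤ).2 = if (dEquiv s).2 then 1 else -1) := by decide

lemma sum_pm {m : ℕ} (p : Fin m → Prop) [DecidablePred p] :
    (∑ k : Fin m, if p k then (1 : ℤ) else -1) =
      (univ.filter p).card - (m - (univ.filter p).card : ℕ) := by
  rw [Finset.sum_ite, Finset.sum_const, Finset.sum_const]
  have h := Finset.card_filter_add_card_filter_not (s := (univ : Finset (Fin m))) p
  rw [Finset.card_univ, Fintype.card_fin] at h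
  have : (univ.filter (fun a => ¬ p a)).card = m - (univ.filter p).card := by omega
  rw [this]
  push_cast [nsmul_eq_mul]
  ring

lemma cond_iff {n : ℕ} (η : Fin (2 * n) → steps) :
    (∑ k, ((η k : ℤ × ℤ)) = 0) ↔
      ((univ.filter fun k => (dEquiv (η k)).1 = true).card = n ∧
       (univ.filter fun k => (dEquiv (η k)).2 = true).card = n) := by
  set a := (univ.filter fun k => (dEquiv (η k)).1 = true).card with ha
  set b := (univ.filter fun k => (dEquiv (η k)).2 = true).card with hb
  have hale : a ≤ 2 * n := by
    rw [ha]; calc _ ≤ (univ : Finset (Fin (2*n))).card := Finset.card_filter_le _ _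
    _ = 2 * n := by rw [Finset.card_univ, Fintype.card_fin]
  have hble : b ≤ 2 * n := by
    rw [hb]; calc _ ≤ (univ : Finset (Fin (2*n))).card := Finset.card_filter_le _ _
    _ = 2 * n := by rw [Finset.card_univ, Fintype.card_fin]
  have hs1 : (∑ k, (((η k : ℤ × ℤ)).1 + ((η k : ℤ × ℤ)).2)) = (a : ℤ) - ((2 * n - a : ℕ) : ℤ) := by
    rw [ha]
    rw [show (∑ k, (((η k : ℤ × ℤ)).1 + ((η k : ℤ × ℤ)).2))
        = ∑ k : Fin (2*n), (if (dEquiv (η k)).1 = true then (1:ℤ) else -1) from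
      Finset.sum_congr rfl fun k _ => by
        simpa using (dEquiv_val (η k)).1]
    exact sum_pm _
  have hs2 : (∑ k, (((η k : ℤ × ℤ)).1 - ((η k : ℤ × ℤ)).2)) = (b : ℤ) - ((2 * n - b : ℕ) : ℤ) := by
    rw [hb]
    rw [show (∑ k, (((η k : ℤ × ℤ)).1 - ((η k : ℤ × ℤ)).2))
        = ∑ k : Fin (2*n), (if (dEquiv (η k)).2 = true then (1:ℤ) else -1) from
      Finset.sum_congr rfl fun k _ => by
        simpa using (dEquiv_val (η k)).2]
    exact sum_pm _
  rw [Finset.sum_add_distrib] at hs1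
  rw [Finset.sum_sub_distrib] at hs2
  have hfst : (∑ k, ((η k : ℤ × ℤ))).1 = ∑ k, ((η k : ℤ × ℤ)).1 := Prod.fst_sum
  have hsnd : (∑ k, ((η k : ℤ × ℤ))).2 = ∑ k, ((η k : ℤ × ℤ)).2 := Prod.snd_sum
  constructor
  · intro h
    have e1 : ∑ k, ((η k : ℤ × ℤ)).1 = 0 := by
      rw [← hfst, h]; rfl
    have e2 : ∑ k, ((η k : ℤ × ℤ)).2 = 0 := by
      rw [← hsnd, h]; rfl
    omega
  · intro ⟨h1, h2⟩
    have e1 : ∑ k, ((η k : ℤ × ℤ)).1 = 0 := by omega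
    have e2 : ∑ k, ((η k : ℤ × ℤ)).2 = 0 := by omega
    exact Prod.ext_iff.mpr ⟨hfst.trans e1, hsnd.trans e2⟩

lemma card_bool_fun (m n : ℕ) :
    (univ.filter fun f : Fin m → Bool => (univ.filter fun k => f k = true).card = n).card
      = m.choose n := by
  have : (univ.filter fun f : Fin m → Bool => (univ.filter fun k => f k = true).card = n).card
      = (Finset.powersetCard n (univ : Finset (Fin m))).card := by
    refine Finset.card_bij' (fun f _ => univ.filter fun k => f k = true)
      (fun A _ => fun k => decide (k ∈ A)) ?hi ?hj ?li ?ri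
    case hi =>
      intro f hf
      rw [Finset.mem_powersetCard_univ]
      exact (Finset.mem_filter.mp hf).2
    case hj =>
      intro A hA
      rw [Finset.mem_powersetCard_univ] at hA
      rw [Finset.mem_filter]
      refine ⟨Finset.mem_univ _, ?_⟩
      beta_reduce
      have e : (univ.filter fun k : Fin m => decide (k ∈ A) = true) = A := by
        ext k; simp
      rw [e, hA]
    case li =>
      intro f hf
      funext k
      simp
    case ri =>
      intro A hA
      ext k
      simp
  rw [this, Finset.card_powersetCard, Finset.card_univ, Fintype.card_fin]

lemma count_main (n : ℕ) :
    ((univ : Finset (Fin (2*n) → steps)).filter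
        (fun η => ∑ k, ((η k : ℤ × ℤ)) = 0)).card = (Nat.centralBinom n) ^ 2 := by
  have step1 : ((univ : Finset (Fin (2*n) → steps)).filter
        (fun η => ∑ k, ((η k : ℤ × ℤ)) = 0)).card
      = ((univ : Finset (Fin (2*n) → Bool × Bool)).filter
        (fun g => (univ.filter fun k => (g k).1 = true).card = n ∧
                  (univ.filter fun k => (g k).2 = true).card = n)).card := by
    refine Finset.card_bij' (fun η _ => fun k => dEquiv (η k))
      (fun g _ => fun k => dEquiv.symm (g k)) ?hi ?hj ?li ?ri
    case hi =>
      intro η hη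
      rw [Finset.mem_filter] at hη ⊢
      exact ⟨Finset.mem_univ _, (cond_iff η).mp hη.2⟩
    case hj =>
      intro g hg
      rw [Finset.mem_filter] at hg ⊢
      refine ⟨Finset.mem_univ _, ?_⟩
      apply (cond_iff _).mpr
      simpa using hg.2
    case li => intro η _; funext k; simp
    case ri => intro g _; funext k; simp
  have step2 : ((univ : Finset (Fin (2*n) → Bool × Bool)).filter
        (fun g => (univ.filter fun k => (g k).1 = true).card = n ∧
                  (univ.filter fun k => (g k).2 = true).card = n)).card
      = (((univ : Finset (Fin (2*n) → Bool)).filter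
            (fun f => (univ.filter fun k => f k = true).card = n)) ×ˢ
         ((univ : Finset (Fin (2*n) → Bool)).filter
            (fun f => (univ.filter fun k => f k = true).card = n))).card := by
    refine Finset.card_bij' (fun g _ => ((fun k => (g k).1), (fun k => (g k).2)))
      (fun fg _ => fun k => (fg.1 k, fg.2 k)) ?hi ?hj ?li ?ri
    case hi =>
      intro g hg
      rw [Finset.mem_filter] at hg
      rw [Finset.mem_product]
      constructor
      · rw [Finset.mem_filter]; exact ⟨Finset.mem_univ _, hg.2.1⟩
      · rw [Finset.mem_filter]; exact ⟨Finset.mem_univ _, hg.2.2⟩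
    case hj =>
      intro fg hfg
      rw [Finset.mem_product] at hfg
      rw [Finset.mem_filter]
      obtain ⟨h1, h2⟩ := hfg
      rw [Finset.mem_filter] at h1 h2
      exact ⟨Finset.mem_univ _, h1.2, h2.2⟩
    case li => intro g _; rfl
    case ri => intro fg _; rfl
  rw [step1, step2, Finset.card_product, card_bool_fun, Nat.centralBinom]
  ring

lemma pSRW_eq (n : ℕ) : pSRW (2 * n) 0 = ((Nat.centralBinom n : ℝ)) ^ 2 / 4 ^ (2 * n) := by
  have hwp : ∀ η : Fin (2*n) → steps,
      walkPath (0 : ℤ × ℤ) (fun k => ((η k : ℤ × ℤ))) (2*n) = ∑ k, ((η k : ℤ × ℤ)) := by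
    intro η
    unfold walkPath
    rw [zero_add]
    congr 1
    apply Finset.filter_true_of_mem
    intro k _
    exact k.isLt
  unfold pSRW Pwalk Ewalk
  rw [one_mul]
  congr 1
  trans (∑ η : Fin (2*n) → steps, if (∑ k, ((η k : ℤ × ℤ))) = 0 then (1:ℝ) else 0)
  · apply Fintype.sum_equiv (Equiv.funUnique (Fin 1) (Fin (2*n) → steps))
    intro δ
    simp only [Equiv.funUnique_apply]
    have hd : (default : Fin 1) = 0 := rfl
    rw [hd]
    show @ite ℝ (walkPath (0 : ℤ × ℤ) (fun k => ((δ 0 k : ℤ × ℤ))) (2*n) = 0)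
      (Classical.propDecidable _) 1 0 = _
    rw [hwp (δ 0)]
    split_ifs <;> rfl
  · rw [Finset.sum_boole, count_main n]
    push_cast
    ring

lemma pSRW_lb {n : ℕ} (hn : 1 ≤ n) : 1 / (4 * (n:ℝ)) ≤ pSRW (2 * n) 0 := by
  have key : ∀ m : ℕ, 1 ≤ m → 16 ^ m ≤ 4 * m * (Nat.centralBinom m) ^ 2 := by
    intro m hm
    induction m with
    | zero => omega
    | succ k ih =>
      rcases Nat.eq_or_lt_of_le hm with h | h
      · simp [← h, Nat.centralBinom]
      · have hk : 1 ≤ k := by omega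
        have IH := ih hk
        have hrec : (k + 1) * Nat.centralBinom (k + 1) = 2 * (2 * k + 1) * Nat.centralBinom k :=
          Nat.succ_mul_centralBinom_succ k
        have hmain : (k+1)^2 * (16 ^ (k+1)) ≤ (k+1)^2 * (4 * (k+1) * (Nat.centralBinom (k+1))^2) := by
          have e : (k+1)^2 * (4 * (k+1) * (Nat.centralBinom (k+1))^2)
              = 4 * (k+1) * ((k+1) * Nat.centralBinom (k+1))^2 := by ring
          rw [e, hrec]
          calc (k+1)^2 * 16^(k+1) = 16 * (k+1)^2 * 16^k := by ring
          _ ≤ 16 * (k+1)^2 * (4 * k * (Nat.centralBinom k)^2) := by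
              exact Nat.mul_le_mul_left _ IH
          _ ≤ 16 * (k+1) * ((2*k+1)^2 * (Nat.centralBinom k)^2) := by
              have : (k+1) * (4*k) ≤ (2*k+1)^2 := by nlinarith
              nlinarith [this, sq_nonneg (Nat.centralBinom k)]
          _ = 4 * (k+1) * (2 * (2*k+1) * Nat.centralBinom k)^2 := by ring
        exact Nat.le_of_mul_le_mul_left hmain (by positivity)
  have h := key n hn
  rw [pSRW_eq n]
  have hc : (16 : ℝ) ^ n ≤ 4 * n * ((Nat.centralBinom n : ℝ))^2 := by
    exact_mod_cast h
  have h16 : (4 : ℝ) ^ (2*n) = 16 ^ n := by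
    rw [pow_mul]; norm_num
  rw [h16]
  rw [div_le_div_iff₀ (by positivity) (by positivity)]
  nlinarith [pow_pos (show (0:ℝ) < 16 by norm_num) n]

lemma pSRW_nonneg (n : ℕ) (x : ℤ × ℤ) : 0 ≤ pSRW n x := by
  unfold pSRW Pwalk Ewalk
  apply div_nonneg _ (by positivity)
  apply Finset.sum_nonneg
  intro δ _
  beta_reduce
  split_ifs <;> norm_num

lemma harmonic_lb : ∀ N : ℕ, Real.log (N + 1) ≤ ∑ n ∈ Finset.Icc 1 N, (1 : ℝ) / n := by
  intro N
  induction N with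
  | zero => simp
  | succ k ih =>
    rw [Finset.sum_Icc_succ_top (by omega)]
    have hst : Real.log (k + 1 + 1) - Real.log (k + 1) ≤ 1 / (k + 1 : ℝ) := by
      have hpos : (0:ℝ) < (k + 1 : ℝ) := by positivity
      have hx : (0:ℝ) < ((k:ℝ) + 1 + 1) / ((k:ℝ) + 1) := by positivity
      have := Real.log_le_sub_one_of_pos hx
      rw [Real.log_div (by positivity) (by positivity)] at this
      have e : ((k:ℝ) + 1 + 1) / ((k:ℝ) + 1) - 1 = 1 / ((k:ℝ) + 1) := by
        field_simp
        ring
      rw [e] at this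
      exact this
    push_cast
    push_cast at ih
    linarith
  
lemma RN_lb (N : ℕ) : Real.log N ≤ 4 * RN N := by
  have h1 : ∑ n ∈ Finset.Icc 1 N, (1:ℝ) / (4 * n) ≤ RN N := by
    unfold RN
    apply Finset.sum_le_sum
    intro n hn
    rw [Finset.mem_Icc] at hn
    exact pSRW_lb hn.1
  have h2 : ∑ n ∈ Finset.Icc 1 N, (1:ℝ) / (4 * n)
      = (1/4) * ∑ n ∈ Finset.Icc 1 N, (1:ℝ) / n := by
    rw [Finset.mul_sum]
    apply Finset.sum_congr rfl
    intro n _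
    ring
  have h3 := harmonic_lb N
  have h4 : Real.log N ≤ Real.log (N + 1) := by
    rcases Nat.eq_zero_or_pos N with h | h
    · simp [h]
    · apply Real.log_le_log (by positivity)
      push_cast; linarith
  linarith

end SRW
section Comb
open Classical Finset

lemma sum_pow_powerset {α : Type*} (C : Finset α) (x : ℝ) :
    ∑ J ∈ C.powerset, x ^ J.card = (1 + x) ^ C.card := by
  classical
  calc ∑ J ∈ C.powerset, x ^ J.card
      = ∑ J ∈ C.powerset, (∏ _i ∈ J, x) * ∏ _i ∈ C \ J, (1:ℝ) := by
        apply Finset.sum_congr rfl; intro J _; simp [Finset.prod_const]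
    _ = ∏ _i ∈ C, (x + 1) := (Finset.prod_add _ _ C).symm
    _ = (1 + x) ^ C.card := by rw [Finset.prod_const]; ring

lemma key_inj {β : Type*} [DecidableEq β] (C : Finset β) (S' : Finset (Finset β))
    (W : Finset (β × β)) (w : Finset β → β × β)
    (hS : ∀ K ∈ S', K ⊆ C)
    (hw : ∀ K ∈ S', (w K).1 ∈ K ∧ (w K).2 ∈ K ∧ (w K).1 ≠ (w K).2 ∧ w K ∈ W)
    (x : ℝ) (hx : 0 ≤ x) :
    ∑ K ∈ S', x ^ (K.card - 2) ≤ (W.card : ℝ) * (1 + x) ^ C.card := by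
  have hsub : ∀ K ∈ S', ({(w K).1, (w K).2} : Finset β) ⊆ K := by
    intro K hK
    obtain ⟨h1, h2, _, _⟩ := hw K hK
    intro y hy
    simp only [Finset.mem_insert, Finset.mem_singleton] at hy
    rcases hy with rfl | rfl <;> assumption
  have hval : ∀ K ∈ S', x ^ (K.card - 2) = x ^ ((K \ {(w K).1, (w K).2}).card) := by
    intro K hK
    rw [Finset.card_sdiff_of_subset (hsub K hK), Finset.card_pair (hw K hK).2.2.1]
  rw [Finset.sum_congr rfl hval]
  have hinj : ∀ K ∈ S', ∀ K' ∈ S',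
      (fun K => (w K, K \ {(w K).1, (w K).2})) K
        = (fun K => (w K, K \ {(w K).1, (w K).2})) K' → K = K' := by
    intro K hK K' hK' h
    simp only [Prod.mk.injEq] at h
    obtain ⟨hw1, hw2⟩ := h
    have e1 := Finset.sdiff_union_of_subset (hsub K hK)
    have e2 := Finset.sdiff_union_of_subset (hsub K' hK')
    rw [← e1, ← e2, hw2, hw1]
  calc ∑ K ∈ S', x ^ ((K \ {(w K).1, (w K).2}).card)
      = ∑ z ∈ S'.image (fun K => (w K, K \ {(w K).1, (w K).2})), x ^ z.2.card := by
        rw [Finset.sum_image hinj]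
    _ ≤ ∑ z ∈ W ×ˢ C.powerset, x ^ z.2.card := by
        apply Finset.sum_le_sum_of_subset_of_nonneg
        · intro z hz
          rw [Finset.mem_image] at hz
          obtain ⟨K, hK, rfl⟩ := hz
          rw [Finset.mem_product]
          exact ⟨(hw K hK).2.2.2, Finset.mem_powerset.mpr
            ((Finset.sdiff_subset).trans (hS K hK))⟩
        · intro _ _ _; positivity
    _ = (W.card : ℝ) * (1 + x) ^ C.card := by
        rw [Finset.sum_product]
        have hin : ∀ a ∈ W, (∑ y ∈ C.powerset, x ^ (((a, y) : (β×β) × Finset β).2.card))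
            = (1 + x) ^ C.card := fun a _ => sum_pow_powerset C x
        rw [Finset.sum_congr rfl hin, Finset.sum_const, nsmul_eq_mul]

lemma pin_snd {q : ℕ} (p v : Fin q × Fin q)
    (h : (({p.1, p.2} ∩ {v.1, v.2} : Finset (Fin q))).Nonempty)
    (h1 : ¬ v.1 = p.1) (h2 : ¬ v.1 = p.2) (h3 : ¬ v.2 = p.1) : v.2 = p.2 := by
  obtain ⟨y, hy⟩ := h
  simp only [Finset.mem_inter, Finset.mem_insert, Finset.mem_singleton] at hy
  obtain ⟨hy1 | hy1, hy2 | hy2⟩ := hy <;> subst hy1 <;> simp_all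

lemma card_WA (q : ℕ) :
    (((univ : Finset ((Fin q × Fin q) × (Fin q × Fin q)))).filter
      (fun z => (({z.1.1, z.1.2} ∩ {z.2.1, z.2.2} : Finset (Fin q))).Nonempty)).card
      ≤ 4 * q ^ 3 := by
  have hinj : Set.InjOn (fun z : (Fin q × Fin q) × (Fin q × Fin q) =>
      ((z.1, (if z.2.1 = z.1.1 then ((z.2.2, (false, false)) : Fin q × Bool × Bool)
        else if z.2.1 = z.1.2 then (z.2.2, (false, true))
        else if z.2.2 = z.1.1 then (z.2.1, (true, false))
        else (z.2.1, (true, true)))) : (Fin q × Fin q) × (Fin q × Bool × Bool)))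
      ↑((univ : Finset ((Fin q × Fin q) × (Fin q × Fin q))).filter
        (fun z => (({z.1.1, z.1.2} ∩ {z.2.1, z.2.2} : Finset (Fin q))).Nonempty)) := by
    intro a ha b hb heq
    simp only [Finset.mem_coe, Finset.mem_filter, Finset.mem_univ, true_and] at ha hb
    beta_reduce at heq
    rw [Prod.mk.injEq] at heq
    obtain ⟨h1, h2⟩ := heq
    have goal2 : a.2 = b.2 := by
      split_ifs at h2 with c1 c2 c3 c4 c5 c6 c7 c8 c9 c10 c11 c12 c13 c14 c15 <;>
        simp only [Prod.mk.injEq] at h2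
      all_goals try (apply Prod.ext <;> simp_all <;> done)
      all_goals (
        have ea : a.2.2 = a.1.2 :=
          pin_snd a.1 a.2 ha (by assumption) (by assumption) (by assumption)
        have eb : b.2.2 = b.1.2 :=
          pin_snd b.1 b.2 hb (by assumption) (by assumption) (by assumption)
        apply Prod.ext <;> simp_all)
    exact Prod.ext h1 goal2
  calc (((univ : Finset ((Fin q × Fin q) × (Fin q × Fin q)))).filter
      (fun z => (({z.1.1, z.1.2} ∩ {z.2.1, z.2.2} : Finset (Fin q))).Nonempty)).card
      ≤ (univ : Finset ((Fin q × Fin q) × (Fin q × Bool × Bool))).card :=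
        Finset.card_le_card_of_injOn _ (fun a _ => Finset.mem_univ _) hinj
    _ = 4 * q ^ 3 := by
        simp [Finset.card_univ]
        ring

lemma comb_bound (q : ℕ) (hq : 2 ≤ q) (t : ℝ) (ht : 0 ≤ t)
    (h14 : (q : ℝ) ^ 2 * t ^ 2 ≤ 1 / 4) :
    ∑ K ∈ (Cq q).powerset.filter (fun K => 2 ≤ K.card),
        t ^ (2 * K.card - (if ∃ p ∈ K, ∃ p' ∈ K, p ≠ p' ∧
            (({p.1, p.2} ∩ {p'.1, p'.2} : Finset (Fin q))).Nonempty then 1 else 0)) ≤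
      8 * (q : ℝ) ^ 3 * t ^ 3 := by
  haveI : NeZero q := ⟨by omega⟩
  set C := Cq q with hC
  set A : Finset (Fin q × Fin q) → Prop := fun K => ∃ p ∈ K, ∃ p' ∈ K, p ≠ p' ∧
      (({p.1, p.2} ∩ {p'.1, p'.2} : Finset (Fin q))).Nonempty with hA
  set S := C.powerset.filter (fun K => 2 ≤ K.card) with hS
  have hqpos : (0:ℝ) < q := by positivity
  have hqt : (q : ℝ) * t ≤ 1/2 := by nlinarith [mul_nonneg (le_of_lt hqpos) ht]
  have hCcard : C.card ≤ q * q := by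
    calc C.card ≤ (univ : Finset (Fin q × Fin q)).card := Finset.card_le_card (Finset.filter_subset _ _)
    _ = q * q := by simp [Finset.card_univ]
  have hbase : (1 + t ^ 2) ^ C.card ≤ 3 / 2 := by
    have hb1 : (1 + t ^ 2) ^ C.card ≤ (1 + t ^ 2) ^ (q * q) :=
      pow_le_pow_right₀ (by nlinarith) hCcard
    have hb2 : (1 + t ^ 2) ^ (q * q) ≤ (Real.exp (t ^ 2)) ^ (q * q) :=
      pow_le_pow_left₀ (by nlinarith) (by nlinarith [Real.add_one_le_exp (t ^ 2)]) _
    have hb3 : (Real.exp (t ^ 2)) ^ (q * q) = Real.exp ((q * q : ℕ) * t ^ 2) := by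
      rw [← Real.exp_nat_mul]
    have hb4 : Real.exp (((q * q : ℕ) : ℝ) * t ^ 2) ≤ Real.exp (1 / 4) := by
      apply Real.exp_le_exp.mpr
      push_cast
      nlinarith
    have hb5 : Real.exp (1 / 4) ≤ 3 / 2 := by
      have ha : Real.exp (1 / 4) ^ 4 = Real.exp 1 := by
        rw [← Real.exp_nat_mul]; norm_num
      by_contra hcon
      push_neg at hcon
      have h4 : (3 / 2 : ℝ) ^ 4 ≤ Real.exp (1 / 4) ^ 4 :=
        pow_le_pow_left₀ (by norm_num) hcon.le 4
      rw [ha] at h4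
      have := Real.exp_one_lt_d9
      norm_num at h4
      linarith
    calc (1 + t ^ 2) ^ C.card ≤ (Real.exp (t ^ 2)) ^ (q * q) := le_trans hb1 hb2
      _ = Real.exp (((q * q : ℕ) : ℝ) * t ^ 2) := hb3
      _ ≤ 3 / 2 := le_trans hb4 hb5
  -- witness functions
  set wA : Finset (Fin q × Fin q) → (Fin q × Fin q) × (Fin q × Fin q) := fun K =>
    if h : A K then (h.choose, (h.choose_spec.2).choose) else default with hwA
  set wB : Finset (Fin q × Fin q) → (Fin q × Fin q) × (Fin q × Fin q) := fun K =>
    if h : 1 < K.card then ((Finset.one_lt_card.mp h).choose,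
      ((Finset.one_lt_card.mp h).choose_spec.2).choose) else default with hwB
  set WA := (((univ : Finset ((Fin q × Fin q) × (Fin q × Fin q)))).filter
      (fun z => (({z.1.1, z.1.2} ∩ {z.2.1, z.2.2} : Finset (Fin q))).Nonempty)) with hWA
  have hsplit := Finset.sum_filter_add_sum_filter_not S A
    (fun K => t ^ (2 * K.card - (if A K then 1 else 0)))
  have hSsub : ∀ K ∈ S, K ⊆ C ∧ 2 ≤ K.card := by
    intro K hK
    rw [hS, Finset.mem_filter, Finset.mem_powerset] at hK
    exact hK
  -- part A
  have hpartA : ∑ K ∈ S.filter A, t ^ (2 * K.card - (if A K then 1 else 0))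
      ≤ t ^ 3 * ((WA.card : ℝ) * (1 + t ^ 2) ^ C.card) := by
    have hterm : ∀ K ∈ S.filter A, t ^ (2 * K.card - (if A K then 1 else 0))
        = t ^ 3 * (t ^ 2) ^ (K.card - 2) := by
      intro K hK
      rw [Finset.mem_filter] at hK
      obtain ⟨hK1, hK2⟩ := hK
      rw [if_pos hK2]
      rw [show 2 * K.card - 1 = 3 + 2 * (K.card - 2) by
        have := (hSsub K hK1).2; omega]
      rw [pow_add, pow_mul]
    rw [Finset.sum_congr rfl hterm, ← Finset.mul_sum]
    apply mul_le_mul_of_nonneg_left _ (by positivity)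
    apply key_inj C (S.filter A) WA wA
    · intro K hK
      exact (hSsub K (Finset.mem_of_mem_filter K hK)).1
    · intro K hK
      rw [Finset.mem_filter] at hK
      obtain ⟨_, hAK⟩ := hK
      rw [hwA]
      simp only [dif_pos hAK]
      obtain ⟨hp1, hspec⟩ := hAK.choose_spec
      obtain ⟨hp2, hne, hnonempty⟩ := hAK.choose_spec.2.choose_spec
      refine ⟨hp1, hp2, hne, ?_⟩
      rw [hWA, Finset.mem_filter]
      exact ⟨Finset.mem_univ _, hnonempty⟩
    · positivity
  -- part B
  have hpartB : ∑ K ∈ S.filter (fun K => ¬ A K), t ^ (2 * K.card - (if A K then 1 else 0))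
      ≤ t ^ 4 * (((univ : Finset ((Fin q × Fin q) × (Fin q × Fin q))).card : ℝ)
          * (1 + t ^ 2) ^ C.card) := by
    have hterm : ∀ K ∈ S.filter (fun K => ¬ A K), t ^ (2 * K.card - (if A K then 1 else 0))
        = t ^ 4 * (t ^ 2) ^ (K.card - 2) := by
      intro K hK
      rw [Finset.mem_filter] at hK
      obtain ⟨hK1, hK2⟩ := hK
      rw [if_neg hK2]
      rw [show 2 * K.card - 0 = 4 + 2 * (K.card - 2) by
        have := (hSsub K hK1).2; omega]
      rw [pow_add, pow_mul]
    rw [Finset.sum_congr rfl hterm, ← Finset.mul_sum]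
    apply mul_le_mul_of_nonneg_left _ (by positivity)
    apply key_inj C (S.filter (fun K => ¬ A K)) univ wB
    · intro K hK
      exact (hSsub K (Finset.mem_of_mem_filter K hK)).1
    · intro K hK
      have hc : 1 < K.card := (hSsub K (Finset.mem_of_mem_filter K hK)).2
      rw [hwB]
      simp only [dif_pos hc]
      obtain ⟨hp1, hspec⟩ := (Finset.one_lt_card.mp hc).choose_spec
      obtain ⟨hp2, hne⟩ := (Finset.one_lt_card.mp hc).choose_spec.2.choose_spec
      exact ⟨hp1, hp2, hne, Finset.mem_univ _⟩
    · positivity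
  have hAcard : (WA.card : ℝ) ≤ 4 * (q:ℝ) ^ 3 := by
    have := card_WA q
    rw [← hWA] at this
    exact_mod_cast this
  have hBcard : (((univ : Finset ((Fin q × Fin q) × (Fin q × Fin q))).card : ℝ))
      = (q:ℝ) ^ 4 := by
    simp [Finset.card_univ]
    push_cast
    ring
  have hfinal : ∑ K ∈ S, t ^ (2 * K.card - (if A K then 1 else 0))
      ≤ 8 * (q : ℝ) ^ 3 * t ^ 3 := by
    rw [← hsplit]
    have e1 : t ^ 3 * ((WA.card : ℝ) * (1 + t ^ 2) ^ C.card)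
        ≤ t ^ 3 * (4 * (q:ℝ)^3 * (3/2)) := by
      apply mul_le_mul_of_nonneg_left _ (by positivity)
      apply mul_le_mul hAcard hbase (by positivity) (by positivity)
    have e2 : t ^ 4 * (((univ : Finset ((Fin q × Fin q) × (Fin q × Fin q))).card : ℝ)
        * (1 + t ^ 2) ^ C.card) ≤ t ^ 4 * ((q:ℝ)^4 * (3/2)) := by
      apply mul_le_mul_of_nonneg_left _ (by positivity)
      rw [hBcard]
      apply mul_le_mul_of_nonneg_left hbase (by positivity)
    have e3 : t ^ 4 * ((q:ℝ)^4 * (3/2)) ≤ (3/4) * ((q:ℝ)^3 * t^3) := by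
      have : t ^ 4 * ((q:ℝ)^4 * (3/2)) = (3/2) * (((q:ℝ)*t) * ((q:ℝ)^3 * t^3)) := by ring
      rw [this]
      nlinarith [pow_nonneg ht 3, pow_nonneg (le_of_lt hqpos) 3,
        mul_nonneg (pow_nonneg (le_of_lt hqpos) 3) (pow_nonneg ht 3)]
    calc _ ≤ t ^ 3 * (4 * (q:ℝ)^3 * (3/2)) + (3/4) * ((q:ℝ)^3 * t^3) := by
          apply add_le_add (le_trans hpartA e1) (le_trans (le_trans hpartB e2) e3)
      _ ≤ 8 * (q : ℝ) ^ 3 * t ^ 3 := by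
          nlinarith [mul_nonneg (pow_nonneg (le_of_lt hqpos) 3) (pow_nonneg ht 3)]
  exact hfinal

end Comb
section Main
open Real Finset

lemma sigma2_small {μ : Measure ℝ} (hμ : EnvLaw μ)
    (βN : ℕ → ℝ) (bhat : ℝ) (ϑ : ℕ → ℝ)
    (hreg : SC βN bhat ∨ QC μ βN ϑ) :
    ∃ Cc : ℝ, 1 ≤ Cc ∧ ∃ L0 : ℝ, 16 ≤ L0 ∧
      ∀ N : ℕ, L0 ≤ Real.log N → sigma2 μ (βN N) ≤ Cc / Real.log N := by
  rcases hreg with hsc | hqc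
  · obtain ⟨hb0, hb1, hβ⟩ := hsc
    set M := Mconst μ with hM
    have hM0 : (0:ℝ) ≤ M := Mconst_nonneg
    refine ⟨32 * M + 8, by linarith, max 16 (32 * M + 32), le_max_left _ _, ?_⟩
    intro N hL
    have hlog : (16:ℝ) ≤ Real.log N := le_trans (le_max_left _ _) hL
    have hlogM : 32 * M + 32 ≤ Real.log N := le_trans (le_max_right _ _) hL
    have hlogpos : (0:ℝ) < Real.log N := by linarith
    have hR := RN_lb N
    have hRpos : (0:ℝ) < RN N := by linarith
    have hβ2 : (βN N)^2 = bhat^2 / RN N := by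
      rw [hβ N, div_pow, Real.sq_sqrt (le_of_lt hRpos)]
    have hβ2le : (βN N)^2 ≤ 4 / Real.log N := by
      rw [hβ2, div_le_div_iff₀ hRpos hlogpos]
      have hb2 : bhat^2 ≤ 1 := by nlinarith
      nlinarith [mul_le_mul_of_nonneg_right hb2 (le_of_lt hlogpos)]
    have h16 : (4:ℝ) / Real.log N ≤ 1/4 := by
      rw [div_le_div_iff₀ hlogpos (by norm_num : (0:ℝ) < 4)]
      linarith
    have hsq : (2 * βN N)^2 ≤ 1 := by nlinarith [sq_nonneg (βN N)]
    have habs : |2 * βN N| ≤ 1 := by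
      rcases abs_cases (2 * βN N) with ⟨he, _⟩ | ⟨he, _⟩ <;> rw [he] <;> nlinarith
    have hM4 : 4 * M * (βN N)^2 ≤ 1/2 := by
      have h1 : 4 * M * (βN N)^2 ≤ 4 * M * (4 / Real.log N) :=
        mul_le_mul_of_nonneg_left hβ2le (by linarith)
      have h2 : 4 * M * (4 / Real.log N) ≤ 1/2 := by
        rw [show 4 * M * (4 / Real.log N) = 16 * M / Real.log N by ring,
          div_le_iff₀ hlogpos]
        nlinarith
      linarith
    have hs := sigma2_le hμ habs hM4
    calc sigma2 μ (βN N) ≤ 8 * M * (βN N)^2 := hs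
      _ ≤ 8 * M * (4 / Real.log N) := mul_le_mul_of_nonneg_left hβ2le (by linarith)
      _ ≤ (32 * M + 8) / Real.log N := by
          rw [show 8 * M * (4 / Real.log N) = 32 * M / Real.log N by ring]
          gcongr
          linarith
  · have hev : ∀ᶠ N in Filter.atTop, ϑ N / Real.log N ∈ Set.Ioi (-1 : ℝ) :=
      hqc.theta_small.eventually (Ioi_mem_nhds (by norm_num))
    obtain ⟨N1, hN1⟩ := Filter.eventually_atTop.mp hev
    refine ⟨8, by norm_num, max 16 (Real.log N1 + 1), le_max_left _ _, ?_⟩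
    intro N hL
    have hlog : (16:ℝ) ≤ Real.log N := le_trans (le_max_left _ _) hL
    have hlogpos : (0:ℝ) < Real.log N := by linarith
    have hR := RN_lb N
    have hRpos : (0:ℝ) < RN N := by linarith
    have hN2 : 2 ≤ N := by
      by_contra hcon
      push_neg at hcon
      interval_cases N <;> simp_all <;> norm_num at hlog hlogpos <;> linarith
    have hN1le : N1 ≤ N := by
      by_contra hcon
      push_neg at hcon
      have h1 : Real.log N ≤ Real.log N1 := by
        apply Real.log_le_log (by positivity)
        exact_mod_cast le_of_lt hcon
      have h2 : Real.log N1 + 1 ≤ Real.log N := le_trans (le_max_right _ _) hL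
      linarith
    have htheta : (-1 : ℝ) < ϑ N / Real.log N := hN1 N hN1le
    have hsig := hqc.sigma_eq N hN2
    rw [hsig]
    have h1R : (0:ℝ) < 1 / RN N := by positivity
    calc (1 / RN N) * (1 - ϑ N / Real.log N) ≤ (1 / RN N) * 2 := by
          apply mul_le_mul_of_nonneg_left (by linarith) (le_of_lt h1R)
      _ = 2 / RN N := by ring
      _ ≤ 8 / Real.log N := by
          rw [div_le_div_iff₀ hRpos hlogpos]
          nlinarith

end Main

open Classical in
theorem stmt16
    (μ : Measure ℝ) (hμ : EnvLaw μ)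
    (βN : ℕ → ℝ) (bhat : ℝ) (ϑ : ℕ → ℝ)
    (hreg : SC βN bhat ∨ QC μ βN ϑ) :
    ∃ ε : ℝ, 0 < ε ∧ ε < 1 ∧ ∀ N q : ℕ, 2 ≤ q → (q : ℝ) ^ 2 ≤ ε * Real.log N →
      ∑ K ∈ (Cq q).powerset.filter (fun K => 2 ≤ K.card),
        Real.sqrt (sigma2 μ (βN N)) ^
          (2 * K.card - (if ∃ p ∈ K, ∃ p' ∈ K, p ≠ p' ∧
              (({p.1, p.2} ∩ {p'.1, p'.2} : Finset (Fin q))).Nonempty then 1 else 0)) ≤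
        8 * (q : ℝ) ^ 3 * Real.sqrt (sigma2 μ (βN N)) ^ 3 := by
  obtain ⟨Cc, hCc, L0, hL0, hbound⟩ := sigma2_small hμ βN bhat ϑ hreg
  have hCc0 : (0:ℝ) < Cc := by linarith
  have hL00 : (0:ℝ) < L0 := by linarith
  refine ⟨min (1 / (4 * Cc)) (1 / L0), ?_, ?_, ?_⟩
  · apply lt_min (by positivity) (by positivity)
  · apply lt_of_le_of_lt (min_le_right _ _)
    rw [div_lt_one hL00]
    linarith
  intro N q hq hql
  set ε := min (1 / (4 * Cc)) (1 / L0) with hε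
  have hε0 : (0:ℝ) < ε := lt_min (by positivity) (by positivity)
  have hq4 : (4:ℝ) ≤ (q:ℝ)^2 := by
    have : (2:ℝ) ≤ (q:ℝ) := by exact_mod_cast hq
    nlinarith
  have hεl : (4:ℝ) ≤ ε * Real.log N := le_trans hq4 hql
  have hlog4 : 4 / ε ≤ Real.log N := by
    rw [div_le_iff₀ hε0]
    linarith [mul_comm ε (Real.log N)]
  have hinv : L0 ≤ 1 / ε := by
    have h1 : ε ≤ 1 / L0 := min_le_right _ _
    rw [le_div_iff₀ hε0]
    calc L0 * ε ≤ L0 * (1 / L0) := mul_le_mul_of_nonneg_left h1 (le_of_lt hL00)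
      _ = 1 := mul_one_div_cancel (ne_of_gt hL00)
  have hlogL0 : L0 ≤ Real.log N := by
    have : 4 / ε = 4 * (1 / ε) := by ring
    nlinarith [hlog4, hinv, hε0]
  have hlogpos : (0:ℝ) < Real.log N := by linarith
  have hs := hbound N hlogL0
  set t := Real.sqrt (sigma2 μ (βN N)) with htdef
  have ht : 0 ≤ t := Real.sqrt_nonneg _
  have ht2 : t^2 ≤ Cc / Real.log N := by
    rcases le_or_gt 0 (sigma2 μ (βN N)) with hσ | hσ
    · rw [htdef, Real.sq_sqrt hσ]
      exact hs
    · have ht0 : t = 0 := by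
        rw [htdef]
        exact Real.sqrt_eq_zero'.mpr (le_of_lt hσ)
      rw [ht0, show ((0:ℝ))^2 = 0 by norm_num]
      positivity
  have h14 : (q:ℝ)^2 * t^2 ≤ 1/4 := by
    have h1 : (q:ℝ)^2 * t^2 ≤ (ε * Real.log N) * (Cc / Real.log N) :=
      mul_le_mul hql ht2 (sq_nonneg _) (by positivity)
    have h2 : (ε * Real.log N) * (Cc / Real.log N) = ε * Cc := by
      field_simp
    have h3 : ε * Cc ≤ 1/4 := by
      have h4 : ε ≤ 1 / (4 * Cc) := min_le_left _ _
      calc ε * Cc ≤ (1 / (4 * Cc)) * Cc := mul_le_mul_of_nonneg_right h4 (le_of_lt hCc0)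
        _ = 1/4 := by
          field_simp
    linarith [h1, h2 ▸ h1]
  exact comb_bound q hq t ht h14


end DP
end
end
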